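/- arXiv:1705.02242 — 5 statements merged into one kernel-verified Lean document; each statement's English description precedes it below -/
import Mathlib

section
/- Let m_e, m_f, m_g be positive integers and let gamma_e, gamma_f, gamma_g, gamma_P, gamma_S1, gamma_S2, gamma_th be positive reals. Let E, F, G be independent random variables where E is Gamma-distributed with shape m_e and scale gamma_e/m_e, F is Gamma-distributed with shape m_f and scale gamma_f/m_f, and G is Gamma-distributed with shape m_g and scale gamma_g/m_g. Then the primary outage probability satisfies the closed form: P( gamma_P * E / (gamma_S1 * F + gamma_S2 * G + 1) <= gamma_th ) = 1 - exp( - m_e*gamma_th/(gamma_e*gamma_P) ) * sum_{l=0}^{m_e-1} [ (m_e*gamma_th/(gamma_e*gamma_P))^l / l! ] * sum_{t1=0}^{l} sum_{t2=0}^{l-t1} C(l,t1) * C(l-t1,t2) * gamma_S1^{t1} * gamma_S2^{t2} * [ m_f^{m_f} * Gamma(m_f+t1) / (Gamma(m_f) * gamma_f^{m_f}) ] * ( m_f/gamma_f + m_e*gamma_S1*gamma_th/(gamma_e*gamma_P) )^{-(m_f+t1)} * [ m_g^{m_g} * Gamma(m_g+t2) / (Gamma(m_g) * gamma_g^{m_g})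 ] * ( m_g/gamma_g + m_e*gamma_S2*gamma_th/(gamma_e*gamma_P) )^{-(m_g+t2)}, where C(n,k) denotes the binomial coefficient and Gamma is the Gamma function (so Gamma(m+k) = (m+k-1)! for positive integers). -/
open MeasureTheory ProbabilityTheory Real Finset

section Helpers

open scoped NNReal ENNReal

lemma hasDerivAt_erlangS (k : ℕ) (r x : ℝ) :
    HasDerivAt (fun t : ℝ => Real.exp (-(r*t)) * ∑ l ∈ Finset.range (k+1), (r*t)^l / l.factorial)
      (-(Real.exp (-(r*x)) * r * (r*x)^k / k.factorial)) x := by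
  have hrt : ∀ y : ℝ, HasDerivAt (fun t : ℝ => r * t) r y := by
    intro y; simpa using (hasDerivAt_id y).const_mul r
  have hexp : HasDerivAt (fun t : ℝ => Real.exp (-(r*t))) (Real.exp (-(r*x)) * (-r)) x :=
    ((hrt x).neg).exp
  have hsum : HasDerivAt (fun t : ℝ => ∑ l ∈ Finset.range (k+1), (r*t)^l / l.factorial)
      (∑ l ∈ Finset.range (k+1), ((l : ℝ) * (r*x)^(l-1) * r) / l.factorial) x := by
    apply HasDerivAt.fun_sum
    intro l _
    exact ((hrt x).pow l).div_const _
  have h := hexp.fun_mul hsum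
  refine h.congr_deriv ?_
  have hQ : ∑ l ∈ Finset.range (k+1), ((l : ℝ) * (r*x)^(l-1) * r) / l.factorial
      = r * ∑ l ∈ Finset.range k, (r*x)^l / l.factorial := by
    rw [Finset.sum_range_succ']
    simp only [Nat.cast_zero, zero_mul, zero_div, add_zero, Finset.mul_sum, Nat.add_sub_cancel]
    refine Finset.sum_congr rfl fun i _ => ?_
    have h2 : (i.factorial : ℝ) ≠ 0 := Nat.cast_ne_zero.mpr i.factorial_ne_zero
    rw [Nat.factorial_succ]
    push_cast
    field_simp
  rw [hQ, Finset.sum_range_succ]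
  ring

lemma gammaMeasure_Iic_zero (a r : ℝ) : gammaMeasure a r (Set.Iic 0) = 0 := by
  have h1 : gammaMeasure a r (Set.Iio 0) = 0 := by
    rw [gammaMeasure, withDensity_apply _ measurableSet_Iio]
    exact lintegral_gammaPDF_of_nonpos le_rfl
  have h2 : gammaMeasure a r {(0:ℝ)} = 0 :=
    (withDensity_absolutelyContinuous volume _) Real.volume_singleton
  have : Set.Iic (0:ℝ) = Set.Iio 0 ∪ {0} := by
    ext t; simp [le_iff_lt_or_eq]
  rw [this]
  exact measure_union_null h1 h2

lemma erlang_cdf (k : ℕ) {r x : ℝ} (hr : 0 < r) (hx : 0 ≤ x) :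
    (gammaMeasure (↑(k+1)) r (Set.Iic x)).toReal
      = 1 - Real.exp (-(r*x)) * ∑ l ∈ Finset.range (k+1), (r*x)^l / l.factorial := by
  have hpos : (0:ℝ) < ((k+1 : ℕ) : ℝ) := by positivity
  have h1 : (gammaMeasure (↑(k+1)) r (Set.Iic x)).toReal
      = ∫ t in Set.Iic x, gammaPDFReal (↑(k+1)) r t := by
    rw [gammaMeasure, withDensity_apply _ measurableSet_Iic]
    exact (integral_eq_lintegral_of_nonneg_ae
      (ae_of_all _ fun b => gammaPDFReal_nonneg hpos hr b)
      (measurable_gammaPDFReal _ _).aestronglyMeasurable.restrict).symm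
  set g : ℝ → ℝ := fun t => Real.exp (-(r*t)) * r * (r*t)^k / k.factorial with hg
  have h2 : (fun t => gammaPDFReal (↑(k+1)) r t) =ᵐ[volume] (Set.Ioi (0:ℝ)).indicator g := by
    have hne : ∀ᵐ (t : ℝ) ∂volume, t ≠ 0 := by
      rw [ae_iff]
      simpa using Real.volume_singleton (a := (0:ℝ))
    filter_upwards [hne] with t ht
    rcases lt_or_gt_of_ne ht with h | h
    · rw [Set.indicator_of_notMem (by simpa using h.le)]
      simp [gammaPDFReal, not_le.mpr h]
    · rw [Set.indicator_of_mem (by exact h)]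
      simp only [gammaPDFReal, if_pos h.le, hg]
      have hG : Real.Gamma ((k+1 : ℕ) : ℝ) = (k.factorial : ℝ) := by
        push_cast
        exact Real.Gamma_nat_eq_factorial k
      have hr1 : r ^ (((k+1 : ℕ)) : ℝ) = r ^ (k+1) := by
        rw [Real.rpow_natCast]
      have ht1 : t ^ ((((k+1 : ℕ)) : ℝ) - 1) = t ^ k := by
        rw [show (((k+1 : ℕ)) : ℝ) - 1 = ((k : ℕ) : ℝ) by push_cast; ring, Real.rpow_natCast]
      rw [hG, hr1, ht1, mul_pow, pow_succ]
      ring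
  have h3 : ∫ t in Set.Iic x, gammaPDFReal (↑(k+1)) r t = ∫ t in Set.Ioc 0 x, g t := by
    rw [integral_congr_ae (ae_restrict_of_ae h2), setIntegral_indicator measurableSet_Ioi,
      show Set.Iic x ∩ Set.Ioi (0:ℝ) = Set.Ioc 0 x from Set.ext fun t => by
        simp only [Set.mem_inter_iff, Set.mem_Iic, Set.mem_Ioi, Set.mem_Ioc]; tauto]
  have h4 : ∫ t in Set.Ioc 0 x, g t
      = 1 - Real.exp (-(r*x)) * ∑ l ∈ Finset.range (k+1), (r*x)^l / l.factorial := by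
    have hderiv : ∀ t ∈ Set.uIcc 0 x,
        HasDerivAt (fun t => 1 - Real.exp (-(r*t)) * ∑ l ∈ Finset.range (k+1),
          (r*t)^l / l.factorial) (g t) t := by
      intro t _
      have := ((hasDerivAt_const t (1:ℝ)).fun_sub (hasDerivAt_erlangS k r t))
      simpa [hg, sub_neg_eq_add] using this
    have hcont : Continuous g := by
      apply Continuous.div_const
      exact ((Real.continuous_exp.comp (continuous_const.mul continuous_id).neg).mul
        continuous_const).mul ((continuous_const.mul continuous_id).pow k)
    have hfc := intervalIntegral.integral_eq_sub_of_hasDerivAt hderiv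
      (hcont.intervalIntegrable 0 x)
    rw [← intervalIntegral.integral_of_le hx, hfc]
    have hS0 : ∑ l ∈ Finset.range (k+1), (0:ℝ)^l / l.factorial = 1 := by
      rw [Finset.sum_range_succ']
      simp
    simp [hS0]
  rw [h1, h3, h4]

lemma gamma_moment_integrable (m t : ℕ) (hm : 0 < m) {lam a : ℝ} (hlam : 0 < lam) (ha : 0 < a) :
    Integrable (fun x : ℝ => x ^ t * Real.exp (-(a * x))) (gammaMeasure (↑m) lam) := by
  have hmpos : (0:ℝ) < (m:ℝ) := by positivity
  have hfmeas : Measurable (gammaPDF (↑m) lam) := (measurable_gammaPDFReal _ _).ennreal_ofReal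
  rw [gammaMeasure, integrable_withDensity_iff hfmeas
    (ae_of_all _ fun x => ENNReal.ofReal_lt_top)]
  have heq : (fun x : ℝ => x ^ t * Real.exp (-(a * x)) * (gammaPDF (↑m) lam x).toReal)
      = fun x => x ^ t * Real.exp (-(a * x)) * gammaPDFReal (↑m) lam x := by
    funext x
    rw [gammaPDF, ENNReal.toReal_ofReal (gammaPDFReal_nonneg hmpos hlam x)]
  rw [heq]
  set h : ℝ → ℝ := fun x => x ^ t * Real.exp (-(a * x)) * gammaPDFReal (↑m) lam x with hh
  have hIntOn : IntegrableOn h (Set.Ioi 0) := by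
    have base : IntegrableOn
        (fun x : ℝ => lam ^ ((m:ℝ)) / Real.Gamma m *
          (x ^ ((m:ℝ) + t - 1) * Real.exp (-(lam + a) * x ^ (1:ℝ)))) (Set.Ioi 0) :=
      (integrableOn_rpow_mul_exp_neg_mul_rpow
        (by
          have h1 : (1:ℝ) ≤ (m:ℝ) := by exact_mod_cast hm
          have h2 : (0:ℝ) ≤ (t:ℝ) := by positivity
          linarith : (-1:ℝ) < (m:ℝ) + t - 1)
        one_pos (by linarith)).const_mul _
    refine base.congr_fun (fun x hx => ?_) measurableSet_Ioi
    have hx0 : (0:ℝ) < x := hx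
    rw [hh]
    simp only [gammaPDFReal, if_pos hx0.le]
    rw [Real.rpow_one,
      show x ^ ((m:ℝ) + t - 1) = x ^ ((m:ℝ) - 1) * x ^ (t:ℝ) by
        rw [← Real.rpow_add hx0]; ring_nf,
      Real.rpow_natCast x t,
      show Real.exp (-(lam + a) * x) = Real.exp (-(lam * x)) * Real.exp (-(a * x)) by
        rw [← Real.exp_add]; ring_nf]
    ring
  have hae : h =ᵐ[volume] (Set.Ioi (0:ℝ)).indicator h := by
    have hne : ∀ᵐ (x : ℝ) ∂volume, x ≠ 0 := by
      rw [ae_iff]; simpa using Real.volume_singleton (a := (0:ℝ))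
    filter_upwards [hne] with x hx
    rcases lt_or_gt_of_ne hx with hlt | hgt
    · rw [Set.indicator_of_notMem (by simpa using hlt.le), hh]
      simp [gammaPDFReal, not_le.mpr hlt]
    · rw [Set.indicator_of_mem (by exact hgt)]
  exact (((integrable_indicator_iff measurableSet_Ioi).mpr hIntOn).congr hae.symm)

lemma gamma_moment_eq (m t : ℕ) (hm : 0 < m) {lam a : ℝ} (hlam : 0 < lam) (ha : 0 < a) :
    ∫ x, x ^ t * Real.exp (-(a * x)) ∂(gammaMeasure (↑m) lam)
      = lam ^ m * Real.Gamma ((m:ℝ) + t) / (Real.Gamma m * (lam + a) ^ (m + t)) := by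
  have hmpos : (0:ℝ) < (m:ℝ) := by positivity
  have hla : 0 < lam + a := by linarith
  rw [gammaMeasure,
    show gammaPDF (↑m) lam = fun x => ((Real.toNNReal (gammaPDFReal (↑m) lam x) : ℝ≥0) : ℝ≥0∞)
      from rfl,
    integral_withDensity_eq_integral_smul ((measurable_gammaPDFReal _ _).real_toNNReal)]
  have heq : (fun x : ℝ => Real.toNNReal (gammaPDFReal (↑m) lam x) • (x ^ t * Real.exp (-(a * x))))
      = fun x => x ^ t * Real.exp (-(a * x)) * gammaPDFReal (↑m) lam x := by
    funext x
    rw [NNReal.smul_def, smul_eq_mul, Real.coe_toNNReal _ (gammaPDFReal_nonneg hmpos hlam x)]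
    ring
  rw [heq]
  set h : ℝ → ℝ := fun x => x ^ t * Real.exp (-(a * x)) * gammaPDFReal (↑m) lam x with hh
  have hae : h =ᵐ[volume] (Set.Ioi (0:ℝ)).indicator h := by
    have hne : ∀ᵐ (x : ℝ) ∂volume, x ≠ 0 := by
      rw [ae_iff]; simpa using Real.volume_singleton (a := (0:ℝ))
    filter_upwards [hne] with x hx
    rcases lt_or_gt_of_ne hx with hlt | hgt
    · rw [Set.indicator_of_notMem (by simpa using hlt.le), hh]
      simp [gammaPDFReal, not_le.mpr hlt]
    · rw [Set.indicator_of_mem (by exact hgt)]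
  rw [integral_congr_ae hae, integral_indicator measurableSet_Ioi]
  have hcg : ∫ x in Set.Ioi (0:ℝ), h x
      = ∫ x in Set.Ioi (0:ℝ), lam ^ ((m:ℝ)) / Real.Gamma m *
          (x ^ (((m + t : ℕ) : ℝ) - 1) * Real.exp (-((lam + a) * x))) := by
    refine setIntegral_congr_fun measurableSet_Ioi (fun x hx => ?_)
    have hx0 : (0:ℝ) < x := hx
    rw [hh]
    simp only [gammaPDFReal, if_pos hx0.le]
    rw [show x ^ (((m + t : ℕ) : ℝ) - 1) = x ^ ((m:ℝ) - 1) * x ^ (t:ℝ) by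
        rw [← Real.rpow_add hx0]; push_cast; ring_nf,
      Real.rpow_natCast x t,
      show Real.exp (-((lam + a) * x)) = Real.exp (-(lam * x)) * Real.exp (-(a * x)) by
        rw [← Real.exp_add]; ring_nf]
    ring
  rw [hcg, integral_const_mul, integral_rpow_mul_exp_neg_mul_Ioi (by positivity) hla]
  rw [Real.rpow_natCast lam m, show ((1:ℝ)/(lam+a)) ^ (((m+t : ℕ)):ℝ) = ((lam+a) ^ (m+t))⁻¹ by
    rw [Real.rpow_natCast, div_pow, one_pow, one_div]]
  rw [show Real.Gamma (((m+t : ℕ)):ℝ) = Real.Gamma ((m:ℝ) + t) by push_cast; ring_nf]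
  have h1 : Real.Gamma (m:ℝ) ≠ 0 := ne_of_gt (Real.Gamma_pos_of_pos hmpos)
  have h2 : ((lam+a) ^ (m+t)) ≠ 0 := by positivity
  field_simp

lemma trinom_expand (κ a b : ℝ) (m : ℕ) (f g : ℝ) :
    Real.exp (-(κ*(a*f+b*g+1))) * ∑ l ∈ Finset.range m, (κ*(a*f+b*g+1))^l / l.factorial
    = ∑ l ∈ Finset.range m, ∑ t1 ∈ Finset.range (l+1), ∑ t2 ∈ Finset.range (l - t1 + 1),
        (Real.exp (-κ) * (κ^l / l.factorial) *
         ((l.choose t1 : ℝ) * ((l - t1).choose t2 : ℝ) * a^t1 * b^t2)) *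
        ((f^t1 * Real.exp (-(κ*a*f))) * (g^t2 * Real.exp (-(κ*b*g)))) := by
  rw [Finset.mul_sum]
  refine Finset.sum_congr rfl fun l _ => ?_
  have hkey : (a*f+b*g+1)^l = ∑ t1 ∈ Finset.range (l+1), ∑ t2 ∈ Finset.range (l - t1 + 1),
      (a*f)^t1 * (b*g)^t2 * ((l.choose t1 : ℝ) * ((l - t1).choose t2 : ℝ)) := by
    rw [show a*f+b*g+1 = a*f + (b*g+1) by ring, add_pow]
    refine Finset.sum_congr rfl fun t1 _ => ?_
    rw [add_pow, Finset.mul_sum, Finset.sum_mul]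
    refine Finset.sum_congr rfl fun t2 _ => ?_
    simp only [one_pow, mul_one]
    ring
  rw [show Real.exp (-(κ*(a*f+b*g+1))) = Real.exp (-(κ*a*f)) * Real.exp (-(κ*b*g)) * Real.exp (-κ)
      by rw [← Real.exp_add, ← Real.exp_add]; ring_nf,
    show (κ*(a*f+b*g+1))^l = κ^l * (a*f+b*g+1)^l by rw [mul_pow],
    hkey]
  simp only [Finset.mul_sum, Finset.sum_div]
  refine Finset.sum_congr rfl fun t1 _ => Finset.sum_congr rfl fun t2 _ => ?_
  ring

lemma zpow_neg_nat_add (b : ℝ) (n j : ℕ) : b ^ (-((n:ℤ) + (j:ℤ))) = (b ^ (n+j))⁻¹ := by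
  rw [show ((n:ℤ) + (j:ℤ)) = ((n+j : ℕ) : ℤ) by push_cast; ring, zpow_neg, zpow_natCast]

lemma moment_split (mf tt : ℕ) (γ b : ℝ) (hγ : 0 < γ) (hb : b ≠ 0) (hΓ : Real.Gamma mf ≠ 0) :
    ((mf:ℝ)/γ)^mf * Real.Gamma ((mf:ℝ)+tt) / (Real.Gamma mf * b^(mf+tt))
      = ((mf:ℝ)^mf * Real.Gamma ((mf:ℝ)+tt) / (Real.Gamma mf * γ^mf)) * (b^(mf+tt))⁻¹ := by
  rw [div_pow]
  have hbp : b^(mf+tt) ≠ 0 := pow_ne_zero _ hb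
  field_simp

end Helpers

/-- Closed-form primary outage probability
`P(γP·E/(γS1·F + γS2·G + 1) ≤ γth)` for independent Gamma-distributed
squared channel gains `E, F, G`. -/
theorem primary_outage_closed_form
    {Ω : Type*} [MeasurableSpace Ω] (μ : Measure Ω) [IsProbabilityMeasure μ]
    (m_e m_f m_g : ℕ) (hme : 0 < m_e) (hmf : 0 < m_f) (hmg : 0 < m_g)
    (γe γf γg γP γS1 γS2 γth : ℝ)
    (hγe : 0 < γe) (hγf : 0 < γf) (hγg : 0 < γg) (hγP : 0 < γP)
    (hγS1 : 0 < γS1) (hγS2 : 0 < γS2) (hγth : 0 < γth)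
    (E F G : Ω → ℝ) (hE : Measurable E) (hF : Measurable F) (hG : Measurable G)
    (hEd : μ.map E = gammaMeasure m_e ((m_e : ℝ) / γe))
    (hFd : μ.map F = gammaMeasure m_f ((m_f : ℝ) / γf))
    (hGd : μ.map G = gammaMeasure m_g ((m_g : ℝ) / γg))
    (hindep : iIndepFun ![E, F, G] μ) :
    (μ {ω | γP * E ω / (γS1 * F ω + γS2 * G ω + 1) ≤ γth}).toReal =
      1 - Real.exp (-((m_e : ℝ) * γth / (γe * γP))) *
        ∑ l ∈ Finset.range m_e,
          (((m_e : ℝ) * γth / (γe * γP)) ^ l / (Nat.factorial l : ℝ)) *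
          ∑ t1 ∈ Finset.range (l + 1), ∑ t2 ∈ Finset.range (l - t1 + 1),
            (l.choose t1 : ℝ) * ((l - t1).choose t2 : ℝ) * γS1 ^ t1 * γS2 ^ t2 *
            ((m_f : ℝ) ^ m_f * Real.Gamma ((m_f : ℝ) + t1) /
              (Real.Gamma m_f * γf ^ m_f)) *
            ((m_f / γf + (m_e : ℝ) * γS1 * γth / (γe * γP)) ^ (-((m_f : ℤ) + t1))) *
            ((m_g : ℝ) ^ m_g * Real.Gamma ((m_g : ℝ) + t2) /
              (Real.Gamma m_g * γg ^ m_g)) *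
            ((m_g / γg + (m_e : ℝ) * γS2 * γth / (γe * γP)) ^ (-((m_g : ℤ) + t2))) := by
  obtain ⟨k, rfl⟩ : ∃ k, m_e = k + 1 := ⟨m_e - 1, (Nat.succ_pred_eq_of_pos hme).symm⟩
  -- basic positivity
  have hmepos : (0:ℝ) < ((k+1 : ℕ) : ℝ) := by positivity
  have hmfpos : (0:ℝ) < (m_f : ℝ) := by exact_mod_cast hmf
  have hmgpos : (0:ℝ) < (m_g : ℝ) := by exact_mod_cast hmg
  set κ : ℝ := ((k+1 : ℕ) : ℝ) * γth / (γe * γP) with hκ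
  have hκpos : 0 < κ := by rw [hκ]; positivity
  -- the measures
  set νe : Measure ℝ := gammaMeasure (↑(k+1)) (((k+1:ℕ) : ℝ) / γe) with hνe
  set νf : Measure ℝ := gammaMeasure (↑m_f) ((m_f : ℝ) / γf) with hνf
  set νg : Measure ℝ := gammaMeasure (↑m_g) ((m_g : ℝ) / γg) with hνg
  haveI : IsProbabilityMeasure νe :=
    isProbabilityMeasure_gammaMeasure hmepos (by positivity)
  haveI : IsProbabilityMeasure νf :=
    isProbabilityMeasure_gammaMeasure hmfpos (by positivity)
  haveI : IsProbabilityMeasure νg :=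
    isProbabilityMeasure_gammaMeasure hmgpos (by positivity)
  set ρ : Measure (ℝ × ℝ) := νf.prod νg with hρ
  haveI : IsProbabilityMeasure ρ := by rw [hρ]; infer_instance
  -- the event set
  set S : Set ((ℝ × ℝ) × ℝ) :=
    {p | γP * p.2 / (γS1 * p.1.1 + γS2 * p.1.2 + 1) ≤ γth} with hSdef
  have hS : MeasurableSet S := by
    have hmeasfun : Measurable (fun p : (ℝ×ℝ)×ℝ => γP * p.2 / (γS1*p.1.1 + γS2*p.1.2 + 1)) := by
      fun_prop
    exact measurableSet_le hmeasfun measurable_const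
  set T : Ω → (ℝ × ℝ) × ℝ := fun ω => ((F ω, G ω), E ω) with hT
  have hTm : Measurable T := (hF.prodMk hG).prodMk hE
  -- independence
  have hmeasv : ∀ i, Measurable (![E, F, G] i) := by
    intro i; fin_cases i <;> assumption
  have hFGE : IndepFun (fun ω => (F ω, G ω)) E μ := by
    have h := hindep.indepFun_prodMk hmeasv 1 2 0 (by decide) (by decide)
    exact h
  have hFG : IndepFun F G μ := by
    have h := hindep.indepFun (show (1 : Fin 3) ≠ 2 by decide)
    exact h
  have hmapT : μ.map T = ρ.prod νe := by
    rw [hT]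
    rw [(indepFun_iff_map_prod_eq_prod_map_map ((hF.prodMk hG).aemeasurable)
      hE.aemeasurable).mp hFGE]
    rw [(indepFun_iff_map_prod_eq_prod_map_map hF.aemeasurable hG.aemeasurable).mp hFG]
    rw [hEd, hFd, hGd]
  -- event as preimage
  have hevent : {ω | γP * E ω / (γS1 * F ω + γS2 * G ω + 1) ≤ γth} = T ⁻¹' S := rfl
  have hμapply : μ {ω | γP * E ω / (γS1 * F ω + γS2 * G ω + 1) ≤ γth}
      = ∫⁻ y, νe (Prod.mk y ⁻¹' S) ∂ρ := by
    rw [hevent, ← Measure.map_apply hTm hS, hmapT, Measure.prod_apply hS]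
  -- section function
  set Φ : ℝ × ℝ → ℝ := fun y => (νe (Prod.mk y ⁻¹' S)).toReal with hΦdef
  have hΦmeas : Measurable Φ := (measurable_measure_prodMk_left hS).ennreal_toReal
  have htoReal : (μ {ω | γP * E ω / (γS1 * F ω + γS2 * G ω + 1) ≤ γth}).toReal
      = ∫ y, Φ y ∂ρ := by
    rw [hμapply, integral_eq_lintegral_of_nonneg_ae
      (ae_of_all _ fun y => ENNReal.toReal_nonneg) hΦmeas.aestronglyMeasurable]
    congr 1
    exact lintegral_congr fun y => (ENNReal.ofReal_toReal (measure_ne_top νe _)).symm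
  -- a.e. positivity of coordinates
  have hae_pos : ∀ᵐ y ∂ρ, 0 < y.1 ∧ 0 < y.2 := by
    rw [ae_iff]
    have hsub : {y : ℝ × ℝ | ¬(0 < y.1 ∧ 0 < y.2)}
        ⊆ (Set.Iic 0 ×ˢ Set.univ) ∪ (Set.univ ×ˢ Set.Iic 0) := by
      intro y hy
      simp only [Set.mem_setOf_eq, not_and_or, not_lt] at hy
      rcases hy with h | h
      · exact Or.inl ⟨h, trivial⟩
      · exact Or.inr ⟨trivial, h⟩
    refine measure_mono_null hsub (measure_union_null ?_ ?_)
    · rw [hρ, Measure.prod_prod, hνf, gammaMeasure_Iic_zero, zero_mul]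
    · rw [hρ, Measure.prod_prod, hνg, gammaMeasure_Iic_zero, mul_zero]
  -- a.e. identification with the Erlang CDF
  have hΦae : Φ =ᵐ[ρ] fun y =>
      1 - Real.exp (-(κ * (γS1*y.1 + γS2*y.2 + 1))) *
        ∑ l ∈ Finset.range (k+1), (κ * (γS1*y.1 + γS2*y.2 + 1))^l / l.factorial := by
    filter_upwards [hae_pos] with y hy
    have hd : 0 < γS1*y.1 + γS2*y.2 + 1 := by
      have h1 := mul_pos hγS1 hy.1
      have h2 := mul_pos hγS2 hy.2
      linarith
    have hsec : Prod.mk y ⁻¹' S = Set.Iic (γth * (γS1*y.1 + γS2*y.2 + 1) / γP) := by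
      ext x
      simp only [hSdef, Set.mem_preimage, Set.mem_setOf_eq, Set.mem_Iic]
      rw [div_le_iff₀ hd, mul_comm γP x]
      exact (le_div_iff₀ hγP).symm
    have hxnn : 0 ≤ γth * (γS1*y.1 + γS2*y.2 + 1) / γP :=
      div_nonneg (mul_nonneg hγth.le hd.le) hγP.le
    rw [hΦdef]
    simp only
    rw [hsec, hνe, erlang_cdf k (by positivity) hxnn]
    have hrp : ((k+1:ℕ) : ℝ) / γe * (γth * (γS1*y.1 + γS2*y.2 + 1) / γP)
        = κ * (γS1*y.1 + γS2*y.2 + 1) := by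
      rw [hκ]; ring
    rw [hrp]
  rw [htoReal, integral_congr_ae hΦae]
  -- expand the integrand
  have hfun : (fun y : ℝ × ℝ =>
      1 - Real.exp (-(κ * (γS1*y.1 + γS2*y.2 + 1))) *
        ∑ l ∈ Finset.range (k+1), (κ * (γS1*y.1 + γS2*y.2 + 1))^l / l.factorial)
      = fun y => 1 - ∑ l ∈ Finset.range (k+1), ∑ t1 ∈ Finset.range (l+1),
          ∑ t2 ∈ Finset.range (l - t1 + 1),
          (Real.exp (-κ) * (κ^l / l.factorial) *
            ((l.choose t1 : ℝ) * ((l - t1).choose t2 : ℝ) * γS1^t1 * γS2^t2)) *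
          ((y.1^t1 * Real.exp (-(κ*γS1*y.1))) * (y.2^t2 * Real.exp (-(κ*γS2*y.2)))) := by
    funext y
    rw [trinom_expand κ γS1 γS2 (k+1) y.1 y.2]
  rw [hfun]
  -- integrability of each factor
  have hIf : ∀ t1 : ℕ, Integrable (fun x : ℝ => x ^ t1 * Real.exp (-(κ*γS1*x))) νf := by
    intro t1
    rw [hνf]
    exact gamma_moment_integrable m_f t1 hmf (by positivity) (by positivity)
  have hIg : ∀ t2 : ℕ, Integrable (fun x : ℝ => x ^ t2 * Real.exp (-(κ*γS2*x))) νg := by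
    intro t2
    rw [hνg]
    exact gamma_moment_integrable m_g t2 hmg (by positivity) (by positivity)
  have hTermInt : ∀ l t1 t2 : ℕ, Integrable (fun y : ℝ × ℝ =>
      (Real.exp (-κ) * (κ^l / l.factorial) *
        ((l.choose t1 : ℝ) * ((l - t1).choose t2 : ℝ) * γS1^t1 * γS2^t2)) *
      ((y.1^t1 * Real.exp (-(κ*γS1*y.1))) * (y.2^t2 * Real.exp (-(κ*γS2*y.2))))) ρ := by
    intro l t1 t2
    exact (((hIf t1).mul_prod (hIg t2)).const_mul _)
  have hSumInt : Integrable (fun y : ℝ × ℝ =>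
      ∑ l ∈ Finset.range (k+1), ∑ t1 ∈ Finset.range (l+1), ∑ t2 ∈ Finset.range (l - t1 + 1),
        (Real.exp (-κ) * (κ^l / l.factorial) *
          ((l.choose t1 : ℝ) * ((l - t1).choose t2 : ℝ) * γS1^t1 * γS2^t2)) *
        ((y.1^t1 * Real.exp (-(κ*γS1*y.1))) * (y.2^t2 * Real.exp (-(κ*γS2*y.2))))) ρ := by
    apply integrable_finset_sum
    intro l _
    apply integrable_finset_sum
    intro t1 _
    apply integrable_finset_sum
    intro t2 _
    exact hTermInt l t1 t2
  rw [integral_sub (integrable_const 1) hSumInt, integral_const, probReal_univ]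
  simp only [ENNReal.toReal_one, smul_eq_mul, mul_one, one_smul]
  rw [integral_finset_sum _ (fun l _ => by
    apply integrable_finset_sum
    intro t1 _
    apply integrable_finset_sum
    intro t2 _
    exact hTermInt l t1 t2)]
  congr 1
  rw [Finset.mul_sum]
  refine Finset.sum_congr rfl fun l _ => ?_
  rw [integral_finset_sum _ (fun t1 _ => by
    apply integrable_finset_sum
    intro t2 _
    exact hTermInt l t1 t2)]
  rw [Finset.mul_sum, Finset.mul_sum]
  refine Finset.sum_congr rfl fun t1 _ => ?_
  rw [integral_finset_sum _ (fun t2 _ => hTermInt l t1 t2)]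
  rw [Finset.mul_sum, Finset.mul_sum]
  refine Finset.sum_congr rfl fun t2 _ => ?_
  rw [integral_const_mul, hρ,
    integral_prod_mul (f := fun x : ℝ => x ^ t1 * Real.exp (-(κ*γS1*x)))
      (g := fun x : ℝ => x ^ t2 * Real.exp (-(κ*γS2*x)))]
  have hvf : ∫ x, x ^ t1 * Real.exp (-(κ*γS1*x)) ∂νf
      = ((m_f:ℝ)/γf) ^ m_f * Real.Gamma ((m_f:ℝ) + t1)
        / (Real.Gamma m_f * ((m_f:ℝ)/γf + κ*γS1) ^ (m_f + t1)) := by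
    rw [hνf]
    exact gamma_moment_eq m_f t1 hmf (by positivity) (by positivity)
  have hvg : ∫ x, x ^ t2 * Real.exp (-(κ*γS2*x)) ∂νg
      = ((m_g:ℝ)/γg) ^ m_g * Real.Gamma ((m_g:ℝ) + t2)
        / (Real.Gamma m_g * ((m_g:ℝ)/γg + κ*γS2) ^ (m_g + t2)) := by
    rw [hνg]
    exact gamma_moment_eq m_g t2 hmg (by positivity) (by positivity)
  rw [hvf, hvg]
  -- rewrite the zpow in the target and match
  have hbf : (m_f:ℝ)/γf + ((k+1:ℕ):ℝ) * γS1 * γth / (γe * γP) = (m_f:ℝ)/γf + κ*γS1 := by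
    rw [hκ]; ring
  have hbg : (m_g:ℝ)/γg + ((k+1:ℕ):ℝ) * γS2 * γth / (γe * γP) = (m_g:ℝ)/γg + κ*γS2 := by
    rw [hκ]; ring
  rw [zpow_neg_nat_add, zpow_neg_nat_add, hbf, hbg]
  have hΓf : Real.Gamma (m_f:ℝ) ≠ 0 := ne_of_gt (Real.Gamma_pos_of_pos hmfpos)
  have hΓg : Real.Gamma (m_g:ℝ) ≠ 0 := ne_of_gt (Real.Gamma_pos_of_pos hmgpos)
  have hbfne : (m_f:ℝ)/γf + κ*γS1 ≠ 0 := by positivity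
  have hbgne : (m_g:ℝ)/γg + κ*γS2 ≠ 0 := by positivity
  rw [moment_split m_f t1 γf _ hγf hbfne hΓf, moment_split m_g t2 γg _ hγg hbgne hΓg]
  ring
end

section
/- Let m_e, m_l be positive integers and let gamma_e, gamma_l, gamma_P, gamma_R, Theta be positive reals. Let E and L be independent random variables where E is Gamma-distributed with shape m_e and scale gamma_e/m_e and L is Gamma-distributed with shape m_l and scale gamma_l/m_l. Set a = m_e*Theta/(gamma_e*gamma_P). Then P( gamma_P * E / (gamma_R * L + 1) <= Theta ) = 1 - exp(-a) * sum_{l=0}^{m_e-1} (a^l / l!) * sum_{i=0}^{l} C(l,i) * gamma_R^{l-i} * [ m_l^{m_l} / (Gamma(m_l) * gamma_l^{m_l}) ] * (m_l + l - i - 1)! * ( a*gamma_R + m_l/gamma_l )^{-(m_l + l - i)}, where C(n,k) denotes the binomial coefficient and Gamma is the Gamma function. -/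
open MeasureTheory ProbabilityTheory Real Finset Set
open scoped ENNReal NNReal

lemma integrableOn_pow_mul_exp_neg (n : ℕ) {c : ℝ} (hc : 0 < c) :
    IntegrableOn (fun x : ℝ => x ^ n * Real.exp (-(c * x))) (Set.Ioi 0) := by
  have h := integrableOn_rpow_mul_exp_neg_mul_rpow (s := (n:ℝ)) (p := 1)
    (lt_of_lt_of_le neg_one_lt_zero (Nat.cast_nonneg n)) zero_lt_one hc
  simpa [Real.rpow_natCast, Real.rpow_one, neg_mul] using h

lemma integral_pow_mul_exp_neg (n : ℕ) {c : ℝ} (hc : 0 < c) :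
    ∫ x in Set.Ioi 0, x ^ n * Real.exp (-(c * x)) = n.factorial / c ^ (n+1) := by
  have h := Real.integral_rpow_mul_exp_neg_mul_Ioi (a := (n:ℝ)+1) (by positivity) hc
  rw [show ((n:ℝ)+1-1) = (n:ℝ) by ring, Real.Gamma_nat_eq_factorial] at h
  simp_rw [Real.rpow_natCast] at h
  rw [show ((n:ℝ)+1) = ((n+1 : ℕ):ℝ) by push_cast; ring, Real.rpow_natCast] at h
  rw [h, one_div, inv_pow]
  field_simp

lemma hasDerivAt_gammaF (k : ℕ) (r t : ℝ) :
    HasDerivAt (fun t => Real.exp (-(r*t)) * ∑ l ∈ Finset.range (k+1), (r*t)^l / l.factorial)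
      (-(r * ((r*t)^k / k.factorial) * Real.exp (-(r*t)))) t := by
  have h1 : HasDerivAt (fun t : ℝ => r * t) r t := by
    simpa using (hasDerivAt_id t).const_mul r
  have hexp : HasDerivAt (fun t => Real.exp (-(r*t))) (Real.exp (-(r*t)) * (-r)) t :=
    h1.neg.exp
  have hsum : HasDerivAt (fun t => ∑ l ∈ Finset.range (k+1), (r*t)^l / l.factorial)
      (∑ l ∈ Finset.range (k+1), ((l : ℝ) * (r*t)^(l-1) * r) / l.factorial) t :=
    HasDerivAt.fun_sum fun l _ => (h1.pow l).div_const _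
  have hsum_eq : ∑ l ∈ Finset.range (k+1), ((l : ℝ) * (r*t)^(l-1) * r) / l.factorial
      = r * ∑ j ∈ Finset.range k, (r*t)^j / j.factorial := by
    rw [Finset.sum_range_succ']
    simp only [Nat.cast_zero, zero_mul, Nat.factorial_zero, Nat.cast_one, zero_div, add_zero,
      Nat.add_sub_cancel, Nat.factorial_succ, Finset.mul_sum]
    refine Finset.sum_congr rfl fun i _ => ?_
    have hi : ((i:ℝ)+1) ≠ 0 := by positivity
    push_cast
    field_simp
  have := hexp.mul hsum
  rw [hsum_eq] at this
  refine this.congr_deriv ?_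
  rw [Finset.sum_range_succ]
  ring

lemma gammaPDFReal_eq_nat {m : ℕ} (hm : 0 < m) {r x : ℝ} (hx : 0 ≤ x) :
    gammaPDFReal m r x = r^m / (m-1).factorial * x^(m-1) * Real.exp (-(r*x)) := by
  obtain ⟨k, rfl⟩ : ∃ k, m = k + 1 := ⟨m-1, (Nat.succ_pred_eq_of_pos hm).symm⟩
  simp only [gammaPDFReal, if_pos hx, Nat.add_sub_cancel]
  rw [Real.rpow_natCast, show (((k+1:ℕ)):ℝ) - 1 = ((k:ℕ):ℝ) by push_cast; ring,
    Real.rpow_natCast, show (((k+1:ℕ)):ℝ) = (k:ℝ)+1 by push_cast; ring,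
    Real.Gamma_nat_eq_factorial]

lemma gamma_ftc (m : ℕ) (hm : 0 < m) (r t : ℝ) :
    ∫ x in (0:ℝ)..t, r^m / (m-1).factorial * x^(m-1) * Real.exp (-(r*x))
      = 1 - Real.exp (-(r*t)) * ∑ l ∈ Finset.range m, (r*t)^l / l.factorial := by
  obtain ⟨k, rfl⟩ : ∃ k, m = k + 1 := ⟨m-1, (Nat.succ_pred_eq_of_pos hm).symm⟩
  simp only [Nat.add_sub_cancel]
  have hF : ∀ x ∈ Set.uIcc (0:ℝ) t,
      HasDerivAt (fun t => -(Real.exp (-(r*t)) * ∑ l ∈ Finset.range (k+1), (r*t)^l / l.factorial))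
        (r^(k+1) / k.factorial * x^k * Real.exp (-(r*x))) x := by
    intro x _
    have h := (hasDerivAt_gammaF k r x).neg
    refine h.congr_deriv ?_
    rw [mul_pow]
    ring
  have hcont : Continuous fun x : ℝ => r^(k+1)/(k.factorial : ℝ) * x^k * Real.exp (-(r*x)) := by
    fun_prop
  have hI := intervalIntegral.integral_eq_sub_of_hasDerivAt hF (hcont.intervalIntegrable 0 t)
  rw [hI]
  have h0 : ∑ l ∈ Finset.range (k+1), (r*(0:ℝ))^l / l.factorial = 1 := by
    rw [mul_zero, Finset.sum_eq_single 0]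
    · simp
    · intro b _ hb; simp [zero_pow hb]
    · intro h; exact absurd (Finset.mem_range.2 (Nat.succ_pos k)) h
  rw [h0, mul_zero, neg_zero, Real.exp_zero, mul_one]
  ring

lemma gamma_cdf_nonneg (m : ℕ) (hm : 0 < m) {r : ℝ} (hr : 0 < r) {t : ℝ} (ht : 0 ≤ t) :
    0 ≤ 1 - Real.exp (-(r*t)) * ∑ l ∈ Finset.range m, (r*t)^l / l.factorial := by
  rw [← gamma_ftc m hm r t]
  apply intervalIntegral.integral_nonneg ht
  intro x hx
  exact mul_nonneg (mul_nonneg (by positivity) (pow_nonneg hx.1 _)) (Real.exp_pos _).le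

lemma gammaMeasure_Iic (m : ℕ) (hm : 0 < m) {r : ℝ} (hr : 0 < r) {t : ℝ} (ht : 0 ≤ t) :
    gammaMeasure m r (Set.Iic t)
      = ENNReal.ofReal (1 - Real.exp (-(r*t)) * ∑ l ∈ Finset.range m, (r*t)^l / l.factorial) := by
  rw [gammaMeasure, withDensity_apply _ measurableSet_Iic,
    lintegral_Iic_eq_lintegral_Iio_add_Icc _ ht, lintegral_gammaPDF_of_nonpos le_rfl, zero_add]
  have hpdf : ∀ x ∈ Set.Icc (0:ℝ) t, gammaPDF m r x
      = ENNReal.ofReal (r^m/(m-1).factorial * x^(m-1) * Real.exp (-(r*x))) := fun x hx => by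
    rw [gammaPDF, gammaPDFReal_eq_nat hm hx.1]
  rw [setLIntegral_congr_fun measurableSet_Icc hpdf,
    ← ofReal_integral_eq_lintegral_ofReal]
  · congr 1
    rw [MeasureTheory.integral_Icc_eq_integral_Ioc, ← intervalIntegral.integral_of_le ht,
      gamma_ftc m hm r t]
  · exact (by fun_prop :
      Continuous fun x : ℝ => r^m/((m-1).factorial : ℝ) * x^(m-1) * Real.exp (-(r*x))).integrableOn_Icc
  · filter_upwards [ae_restrict_mem measurableSet_Icc] with x hx
    exact mul_nonneg (mul_nonneg (by positivity) (pow_nonneg hx.1 _)) (Real.exp_pos _).le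

/-- Closed-form primary outage probability in the broadcast phase,
`P(γP·E/(γR·L + 1) ≤ Θ)` for independent Gamma-distributed `E` and `L`. -/
theorem primary_outage_bc_closed_form
    {Ω : Type*} [MeasurableSpace Ω] (μ : Measure Ω) [IsProbabilityMeasure μ]
    (m_e m_l : ℕ) (hme : 0 < m_e) (hml : 0 < m_l)
    (γe γl γP γR Θ : ℝ)
    (hγe : 0 < γe) (hγl : 0 < γl) (hγP : 0 < γP) (hγR : 0 < γR) (hΘ : 0 < Θ)
    (E L : Ω → ℝ) (hE : Measurable E) (hL : Measurable L)
    (hEd : μ.map E = gammaMeasure m_e ((m_e : ℝ) / γe))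
    (hLd : μ.map L = gammaMeasure m_l ((m_l : ℝ) / γl))
    (hindep : IndepFun E L μ) :
    (μ {ω | γP * E ω / (γR * L ω + 1) ≤ Θ}).toReal =
      1 - Real.exp (-((m_e : ℝ) * Θ / (γe * γP))) *
        ∑ l ∈ Finset.range m_e,
          (((m_e : ℝ) * Θ / (γe * γP)) ^ l / (Nat.factorial l : ℝ)) *
          ∑ i ∈ Finset.range (l + 1),
            (l.choose i : ℝ) * γR ^ (l - i) *
            ((m_l : ℝ) ^ m_l / (Real.Gamma m_l * γl ^ m_l)) *
            (Nat.factorial (m_l + l - i - 1) : ℝ) *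
            (((m_e : ℝ) * Θ / (γe * γP)) * γR + (m_l : ℝ) / γl) ^ (-((m_l : ℤ) + l - i)) := by
  set a : ℝ := (m_e : ℝ) * Θ / (γe * γP) with ha_def
  set re : ℝ := (m_e : ℝ) / γe with hre_def
  set rl : ℝ := (m_l : ℝ) / γl with hrl_def
  set c : ℝ := a * γR with hc_def
  have hme' : (0:ℝ) < m_e := by exact_mod_cast hme
  have hml' : (0:ℝ) < m_l := by exact_mod_cast hml
  have ha : 0 < a := by rw [ha_def]; positivity
  have hre : 0 < re := by rw [hre_def]; positivity
  have hrl : 0 < rl := by rw [hrl_def]; positivity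
  have hcrl : 0 < c + rl := by rw [hc_def]; positivity
  haveI hPE : IsProbabilityMeasure (gammaMeasure m_e re) := isProbabilityMeasure_gammaMeasure hme' hre
  haveI hPL : IsProbabilityMeasure (gammaMeasure m_l rl) := isProbabilityMeasure_gammaMeasure hml' hrl
  have hS : MeasurableSet {p : ℝ × ℝ | γP * p.2 / (γR * p.1 + 1) ≤ Θ} := by
    apply measurableSet_le _ measurable_const
    fun_prop
  have hmap : μ.map (fun ω => (L ω, E ω)) = (gammaMeasure m_l rl).prod (gammaMeasure m_e re) := by
    rw [← hLd, ← hEd]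
    exact (indepFun_iff_map_prod_eq_prod_map_map hL.aemeasurable hE.aemeasurable).1 hindep.symm
  have h1 : μ {ω | γP * E ω / (γR * L ω + 1) ≤ Θ}
      = ((gammaMeasure m_l rl).prod (gammaMeasure m_e re))
          {p : ℝ × ℝ | γP * p.2 / (γR * p.1 + 1) ≤ Θ} := by
    rw [← hmap, Measure.map_apply (hL.prodMk hE) hS]
    rfl
  have hae : ∀ᵐ y ∂(gammaMeasure m_l rl), 0 < y := by
    rw [ae_iff]
    have hset : {y : ℝ | ¬ 0 < y} = Set.Iic 0 := by ext y; simp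
    rw [hset, gammaMeasure, withDensity_apply _ measurableSet_Iic,
      setLIntegral_congr (Iio_ae_eq_Iic (a := (0:ℝ))).symm]
    exact lintegral_gammaPDF_of_nonpos le_rfl
  set G : ℝ → ℝ := fun y =>
      1 - Real.exp (-(a*(γR*y+1))) * ∑ l ∈ Finset.range m_e, (a*(γR*y+1))^l / l.factorial
    with hG_def
  have hkey : ∀ y : ℝ, re * (Θ*(γR*y+1)/γP) = a*(γR*y+1) := by
    intro y
    rw [hre_def, ha_def]
    field_simp
  have h4 : μ {ω | γP * E ω / (γR * L ω + 1) ≤ Θ}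
      = ∫⁻ y, ENNReal.ofReal (G y) ∂(gammaMeasure m_l rl) := by
    rw [h1, Measure.prod_apply hS]
    refine lintegral_congr_ae ?_
    filter_upwards [hae] with y hy
    have hd : 0 < γR * y + 1 := by positivity
    have hsetE : (Prod.mk y ⁻¹' {p : ℝ × ℝ | γP * p.2 / (γR * p.1 + 1) ≤ Θ})
        = Set.Iic (Θ*(γR*y+1)/γP) := by
      ext x
      simp only [Set.mem_preimage, Set.mem_setOf_eq, Set.mem_Iic]
      rw [div_le_iff₀ hd, le_div_iff₀ hγP, mul_comm γP x]
    rw [hsetE, gammaMeasure_Iic m_e hme hre (by positivity), hkey y]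
  have hGnn : 0 ≤ᵐ[gammaMeasure m_l rl] G := by
    filter_upwards [hae] with y hy
    have := gamma_cdf_nonneg m_e hme hre (t := Θ*(γR*y+1)/γP) (by positivity)
    rw [hkey y] at this
    exact this
  have hGc : Continuous G := by
    have hlin : Continuous fun y : ℝ => a*(γR*y+1) := by fun_prop
    exact continuous_const.sub ((hlin.neg.rexp).mul
      (continuous_finset_sum _ fun l _ => (hlin.pow l).div_const _))
  rw [h4, ← integral_eq_lintegral_of_nonneg_ae hGnn hGc.aestronglyMeasurable]
  have h5 : ∫ y, G y ∂(gammaMeasure m_l rl) = ∫ y, gammaPDFReal m_l rl y * G y := by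
    rw [gammaMeasure,
      show gammaPDF m_l rl = fun y => ((gammaPDFReal m_l rl y).toNNReal : ℝ≥0∞) from rfl,
      integral_withDensity_eq_integral_smul (measurable_gammaPDFReal m_l rl).real_toNNReal G]
    refine integral_congr_ae (ae_of_all _ fun y => ?_)
    simp [NNReal.smul_def, Real.coe_toNNReal _ (gammaPDFReal_nonneg hml' hrl y)]
  have h6 : ∫ y, gammaPDFReal m_l rl y * G y = ∫ y in Set.Ioi 0, gammaPDFReal m_l rl y * G y := by
    refine (setIntegral_eq_integral_of_ae_compl_eq_zero ?_).symm
    have h0ne : ∀ᵐ y : ℝ, y ≠ 0 := by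
      rw [ae_iff]
      simp only [ne_eq, not_not, setOf_eq_eq_singleton]
      exact measure_singleton 0
    filter_upwards [h0ne] with y hy hmem
    have hneg : y < 0 := by
      rcases lt_or_ge y 0 with h | h
      · exact h
      · exact absurd (lt_of_le_of_ne h (Ne.symm hy)) hmem
    rw [gammaPDFReal, if_neg (not_le.2 hneg), zero_mul]
  rw [h5, h6]
  set D : ℝ := rl^m_l / ((m_l-1).factorial : ℝ) with hD_def
  set K : ℕ → ℕ → ℝ :=
      fun l i => Real.exp (-a) * a^l / l.factorial * (l.choose i) * γR^i * D with hK_def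
  have hpt : ∀ y ∈ Set.Ioi (0:ℝ), gammaPDFReal m_l rl y * G y
      = D * y^(m_l-1) * Real.exp (-(rl*y))
        - ∑ l ∈ Finset.range m_e, ∑ i ∈ Finset.range (l+1),
            K l i * (y^(m_l-1+i) * Real.exp (-((c+rl)*y))) := by
    intro y hy
    rw [gammaPDFReal_eq_nat hml (le_of_lt hy), hG_def]
    simp only
    rw [mul_sub, mul_one, ← hD_def]
    congr 1
    simp only [Finset.mul_sum]
    refine Finset.sum_congr rfl fun l _ => ?_
    rw [mul_pow a, add_pow]
    simp only [one_pow, mul_one, Finset.mul_sum, Finset.sum_div]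
    refine Finset.sum_congr rfl fun i _ => ?_
    have e1 : Real.exp (-(a*(γR*y+1))) = Real.exp (-a) * Real.exp (-(c*y)) := by
      rw [← Real.exp_add]; congr 1; rw [hc_def]; ring
    have e2 : Real.exp (-((c+rl)*y)) = Real.exp (-(rl*y)) * Real.exp (-(c*y)) := by
      rw [← Real.exp_add]; congr 1; ring
    rw [e1, e2, mul_pow γR y, pow_add, hK_def]
    ring
  rw [setIntegral_congr_fun measurableSet_Ioi hpt]
  have I1 : IntegrableOn (fun y : ℝ => D * y^(m_l-1) * Real.exp (-(rl*y))) (Set.Ioi 0) := by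
    have := (integrableOn_pow_mul_exp_neg (m_l-1) hrl).const_mul D
    simpa [mul_assoc, IntegrableOn] using this
  have I2 : IntegrableOn (fun y : ℝ => ∑ l ∈ Finset.range m_e, ∑ i ∈ Finset.range (l+1),
      K l i * (y^(m_l-1+i) * Real.exp (-((c+rl)*y)))) (Set.Ioi 0) :=
    integrable_finset_sum _ fun l _ => integrable_finset_sum _ fun i _ =>
      (integrableOn_pow_mul_exp_neg _ hcrl).const_mul _
  rw [integral_sub I1 I2]
  have hI1 : ∫ y in Set.Ioi 0, D * y^(m_l-1) * Real.exp (-(rl*y)) = 1 := by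
    simp_rw [mul_assoc]
    rw [MeasureTheory.integral_const_mul, integral_pow_mul_exp_neg _ hrl,
      show m_l - 1 + 1 = m_l by omega, hD_def]
    have h1 : (((m_l-1).factorial : ℝ)) ≠ 0 := by positivity
    field_simp
  have hI2 : ∫ y in Set.Ioi 0, (∑ l ∈ Finset.range m_e, ∑ i ∈ Finset.range (l+1),
      K l i * (y^(m_l-1+i) * Real.exp (-((c+rl)*y))))
      = ∑ l ∈ Finset.range m_e, ∑ i ∈ Finset.range (l+1),
          K l i * ((m_l-1+i).factorial / (c+rl)^(m_l-1+i+1)) := by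
    rw [integral_finset_sum _ (fun l _ => integrable_finset_sum _ fun i _ =>
      (integrableOn_pow_mul_exp_neg _ hcrl).const_mul _)]
    refine Finset.sum_congr rfl fun l _ => ?_
    rw [integral_finset_sum _ (fun i _ => (integrableOn_pow_mul_exp_neg _ hcrl).const_mul _)]
    refine Finset.sum_congr rfl fun i _ => ?_
    rw [MeasureTheory.integral_const_mul, integral_pow_mul_exp_neg _ hcrl]
  rw [hI1, hI2]
  congr 1
  have hΓ : Real.Gamma (m_l:ℝ) = ((m_l-1).factorial : ℝ) := by
    rw [show ((m_l:ℝ)) = ((m_l-1:ℕ):ℝ)+1 by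
        push_cast [Nat.cast_sub (Nat.one_le_iff_ne_zero.2 hml.ne')]; ring,
      Real.Gamma_nat_eq_factorial]
  rw [Finset.mul_sum]
  refine Finset.sum_congr rfl fun l _ => ?_
  rw [← Finset.sum_range_reflect (fun i => (l.choose i : ℝ) * γR ^ (l - i) *
      ((m_l : ℝ) ^ m_l / (Real.Gamma m_l * γl ^ m_l)) *
      (Nat.factorial (m_l + l - i - 1) : ℝ) * (c + rl) ^ (-((m_l : ℤ) + l - i))) (l+1)]
  simp only [Nat.add_sub_cancel]
  rw [Finset.mul_sum, Finset.mul_sum]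
  refine Finset.sum_congr rfl fun i hi => ?_
  have hil : i ≤ l := Nat.lt_succ_iff.1 (Finset.mem_range.1 hi)
  rw [Nat.sub_sub_self hil, Nat.choose_symm hil, hΓ,
    show m_l + l - (l - i) - 1 = m_l - 1 + i by omega,
    show -((m_l : ℤ) + l - ((l - i : ℕ) : ℤ)) = -(((m_l + i : ℕ) : ℤ)) by push_cast [Nat.cast_sub hil]; ring,
    zpow_neg, zpow_natCast,
    show m_l - 1 + i + 1 = m_l + i by omega,
    hK_def, hD_def, hrl_def, div_pow]
  have hfl : ((l.factorial : ℝ)) ≠ 0 := by positivity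
  have hfm : (((m_l-1).factorial : ℝ)) ≠ 0 := by positivity
  have hcr : ((m_l:ℝ)/γl) ≠ 0 := by positivity
  have hpow : (c + (m_l:ℝ)/γl)^(m_l+i) ≠ 0 := by
    rw [← hrl_def]; positivity
  field_simp
end

section
/- Let m_x, m_y, m_z be positive integers, s_x, s_y, s_z > 0, and let X, Y, Z be independent random variables, Gamma-distributed with shapes m_x, m_y, m_z and scales s_x, s_y, s_z respectively. Then for any theta > 0 and c > 0: P( X > theta*(Y + Z + c) ) = exp( - theta*c/s_x ) * sum_{n=0}^{m_x-1} [ (theta/s_x)^n / n! ] * sum_{i1=0}^{n} sum_{i2=0}^{n-i1} C(n,i1) * C(n-i1,i2) * c^{n-i1-i2} * [ Gamma(m_y + i1) / (Gamma(m_y) * s_y^{m_y}) ] * ( theta/s_x + 1/s_y )^{-(m_y+i1)} * [ Gamma(m_z + i2) / (Gamma(m_z) * s_z^{m_z}) ] * ( theta/s_x + 1/s_z )^{-(m_z+i2)}, where C(n,k) denotes the binomial coefficient and Gamma is the Gamma function. -/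
open MeasureTheory ProbabilityTheory Real Finset Set Filter Topology

lemma sum_id_aux (k : ℕ) (u : ℝ) :
    (∑ n ∈ range (k+1), u^n / n.factorial)
      - ∑ n ∈ range (k+1), (n : ℝ) * u^(n-1) / n.factorial
      = u^k / k.factorial := by
  induction k with
  | zero => simp
  | succ k ih =>
    rw [sum_range_succ _ (k+1), sum_range_succ _ (k+1)]
    have hk : (k.factorial : ℝ) ≠ 0 := by exact_mod_cast k.factorial_ne_zero
    have h1 : ((k+1 : ℕ) : ℝ) * u^(k+1-1) / (k+1).factorial = u^k / k.factorial := by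
      rw [Nat.add_sub_cancel, Nat.factorial_succ]
      push_cast
      field_simp
    rw [h1]
    linarith [ih]

lemma hasDerivAt_tail (k : ℕ) (r x : ℝ) :
    HasDerivAt (fun t => -(Real.exp (-(r*t)) * ∑ n ∈ range (k+1), (r*t)^n / n.factorial))
      (Real.exp (-(r*x)) * (r * (r*x)^k / k.factorial)) x := by
  have hlin : HasDerivAt (fun t : ℝ => -(r*t)) (-r) x := by
    simpa using ((hasDerivAt_id x).const_mul r).fun_neg
  have hE : HasDerivAt (fun t => Real.exp (-(r*t))) (Real.exp (-(r*x)) * (-r)) x := hlin.exp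
  have hS : HasDerivAt (fun t => ∑ n ∈ range (k+1), (r*t)^n / n.factorial)
      (∑ n ∈ range (k+1), ((n : ℝ) * (r*x)^(n-1) * r) / n.factorial) x := by
    apply HasDerivAt.fun_sum
    intro n _
    have : HasDerivAt (fun t : ℝ => (r*t)^n) ((n : ℝ) * (r*x)^(n-1) * r) x := by
      simpa using ((hasDerivAt_id x).const_mul r).fun_pow n
    exact this.div_const _
  have h := (hE.fun_mul hS).fun_neg
  refine h.congr_deriv ?_
  have hfac : (∑ n ∈ range (k+1), ((n : ℝ) * (r*x)^(n-1) * r) / n.factorial)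
      = r * ∑ n ∈ range (k+1), (n : ℝ) * (r*x)^(n-1) / n.factorial := by
    rw [Finset.mul_sum]
    exact sum_congr rfl fun n _ => by ring
  have key := sum_id_aux k (r*x)
  rw [hfac, show (∑ n ∈ range (k+1), (n : ℝ) * (r*x)^(n-1) / n.factorial)
      = (∑ n ∈ range (k+1), (r*x)^n / n.factorial) - (r*x)^k / k.factorial by linarith]
  ring

lemma tendsto_tail (k : ℕ) {r : ℝ} (hr : 0 < r) :
    Tendsto (fun t => -(Real.exp (-(r*t)) * ∑ n ∈ range (k+1), (r*t)^n / n.factorial))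
      atTop (𝓝 0) := by
  have h : ∀ n : ℕ, Tendsto (fun t : ℝ => (r*t)^n / n.factorial * Real.exp (-(r*t)))
      atTop (𝓝 0) := by
    intro n
    have h2 : Tendsto (fun y : ℝ => y^n * Real.exp (-y) / n.factorial) atTop (𝓝 0) := by
      simpa using (tendsto_pow_mul_exp_neg_atTop_nhds_zero n).div_const (n.factorial : ℝ)
    have h3 : Tendsto (fun t : ℝ => r * t) atTop atTop :=
      tendsto_id.const_mul_atTop hr
    have h4 := h2.comp h3
    refine h4.congr fun t => ?_
    simp only [Function.comp]
    ring
  have hsum : Tendsto (fun t : ℝ => ∑ n ∈ range (k+1), (r*t)^n / n.factorial * Real.exp (-(r*t)))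
      atTop (𝓝 0) := by
    have := tendsto_finset_sum (range (k+1)) (fun n _ => h n)
    simpa using this
  have := hsum.neg
  rw [neg_zero] at this
  refine this.congr fun t => ?_
  rw [← Finset.sum_mul]
  ring

lemma tail_pieces (k : ℕ) {r t : ℝ} (hr : 0 < r) (ht : 0 ≤ t) :
    (∫ x in Ioi t, Real.exp (-(r*x)) * (r * (r*x)^k / k.factorial)
      = Real.exp (-(r*t)) * ∑ n ∈ range (k+1), (r*t)^n / n.factorial)
    ∧ IntegrableOn (fun x => Real.exp (-(r*x)) * (r * (r*x)^k / k.factorial)) (Ioi t) := by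
  have hderiv : ∀ x ∈ Ici t,
      HasDerivAt (fun t => -(Real.exp (-(r*t)) * ∑ n ∈ range (k+1), (r*t)^n / n.factorial))
        (Real.exp (-(r*x)) * (r * (r*x)^k / k.factorial)) x :=
    fun x _ => hasDerivAt_tail k r x
  have hpos : ∀ x ∈ Ioi t, 0 ≤ Real.exp (-(r*x)) * (r * (r*x)^k / k.factorial) := by
    intro x hx
    have hx0 : (0:ℝ) ≤ x := le_trans ht (le_of_lt hx)
    have : 0 ≤ r * x := mul_nonneg hr.le hx0
    positivity
  have htd := tendsto_tail k hr
  constructor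
  · have := integral_Ioi_of_hasDerivAt_of_nonneg' hderiv hpos htd
    rw [this]
    ring
  · exact integrableOn_Ioi_deriv_of_nonneg' hderiv hpos htd

lemma gammaMeasure_Ioi (m : ℕ) (hm : 0 < m) {r : ℝ} (hr : 0 < r) {t : ℝ} (ht : 0 ≤ t) :
    gammaMeasure m r (Ioi t)
      = ENNReal.ofReal (Real.exp (-(r*t)) * ∑ n ∈ range m, (r*t)^n / n.factorial) := by
  obtain ⟨k, rfl⟩ : ∃ k, m = k+1 := ⟨m-1, by omega⟩
  obtain ⟨hval, hint⟩ := tail_pieces k hr ht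
  rw [gammaMeasure, withDensity_apply _ measurableSet_Ioi]
  have hcong : ∀ x ∈ Ioi t, gammaPDF (k+1) r x
      = ENNReal.ofReal (Real.exp (-(r*x)) * (r * (r*x)^k / k.factorial)) := by
    intro x hx
    have hx0 : 0 < x := lt_of_le_of_lt ht hx
    rw [gammaPDF_of_nonneg hx0.le]
    push_cast
    congr 1
    have h1 : r ^ ((k:ℝ)+1) = r ^ (k+1) := by
      rw [show ((k:ℝ)+1) = ((k+1 : ℕ) : ℝ) by push_cast; ring, Real.rpow_natCast]
    have h2 : x ^ (((k:ℝ)+1) - 1) = x ^ k := by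
      rw [show ((k:ℝ)+1) - 1 = ((k : ℕ) : ℝ) by push_cast; ring, Real.rpow_natCast]
    have h3 : Real.Gamma ((k:ℝ)+1) = k.factorial := Real.Gamma_nat_eq_factorial k
    rw [h1, h2, h3, mul_pow]
    ring
  push_cast
  rw [setLIntegral_congr_fun measurableSet_Ioi hcong,
    ← ofReal_integral_eq_lintegral_ofReal hint
      ((ae_restrict_iff' measurableSet_Ioi).mpr (ae_of_all _ (fun x hx => by
        have hx0 : (0:ℝ) ≤ x := le_trans ht (le_of_lt hx)
        have : 0 ≤ r * x := mul_nonneg hr.le hx0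
        positivity))),
    hval]

lemma intble_pow_exp (n : ℕ) {b : ℝ} (hb : 0 < b) :
    IntegrableOn (fun x : ℝ => x^n * Real.exp (-(b*x))) (Ioi 0) := by
  obtain ⟨_, hint⟩ := tail_pieces n hb le_rfl
  have heq : (fun x : ℝ => x^n * Real.exp (-(b*x)))
      = fun x => (n.factorial / b^(n+1)) * (Real.exp (-(b*x)) * (b * (b*x)^n / n.factorial)) := by
    funext x
    have hbn : (b:ℝ)^(n+1) ≠ 0 := by positivity
    have hfn : (n.factorial : ℝ) ≠ 0 := by exact_mod_cast n.factorial_ne_zero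
    rw [mul_pow]
    field_simp
    ring
  rw [heq]
  exact hint.const_mul _

lemma int_pow_exp (n : ℕ) {b : ℝ} (hb : 0 < b) :
    ∫ x in Ioi 0, x^n * Real.exp (-(b*x)) = n.factorial / b^(n+1) := by
  have h := integral_rpow_mul_exp_neg_mul_Ioi (show (0:ℝ) < (n:ℝ)+1 by positivity) hb
  rw [show ((n:ℝ)+1)-1 = (n:ℝ) by ring] at h
  have h2 : ∫ x in Ioi 0, x^n * Real.exp (-(b*x))
      = ∫ x in Ioi 0, x ^ ((n:ℝ)) * Real.exp (-(b*x)) := by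
    refine setIntegral_congr_fun measurableSet_Ioi fun x hx => ?_
    rw [Real.rpow_natCast]
  rw [h2, h, show ((n:ℝ)+1) = ((n+1:ℕ):ℝ) by push_cast; ring, Real.rpow_natCast,
    show Real.Gamma ((n+1:ℕ):ℝ) = n.factorial by push_cast; exact Real.Gamma_nat_eq_factorial n]
  rw [one_div, inv_pow]
  ring

lemma gamma_moment (m i : ℕ) (hm : 0 < m) {r b : ℝ} (hr : 0 < r) (hb : 0 < b) :
    ∫⁻ y, ENNReal.ofReal (y^i * Real.exp (-(b*y))) ∂(gammaMeasure m r)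
      = ENNReal.ofReal (r^m / Real.Gamma m
          * ((m-1+i).factorial / (b+r)^(m-1+i+1))) := by
  have hmeasf : Measurable (fun y : ℝ => ENNReal.ofReal (y^i * Real.exp (-(b*y)))) := by
    apply Measurable.ennreal_ofReal
    fun_prop
  have hpdfmeas : Measurable (gammaPDF (m:ℝ) r) :=
    (measurable_gammaPDFReal (m:ℝ) r).ennreal_ofReal
  rw [gammaMeasure, lintegral_withDensity_eq_lintegral_mul _ hpdfmeas hmeasf]
  have hsplit : ∫⁻ y, (gammaPDF m r * fun y => ENNReal.ofReal (y^i * Real.exp (-(b*y)))) y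
      = ∫⁻ y in Ioi 0, gammaPDF m r y * ENNReal.ofReal (y^i * Real.exp (-(b*y))) := by
    simp only [Pi.mul_apply]
    rw [← lintegral_add_compl (μ := volume)
      (fun y => gammaPDF m r y * ENNReal.ofReal (y^i * Real.exp (-(b*y))))
      (measurableSet_Ici (a := (0:ℝ)))]
    have hneg : ∫⁻ y in (Ici (0:ℝ))ᶜ, gammaPDF m r y * ENNReal.ofReal (y^i * Real.exp (-(b*y)))
        = 0 := by
      rw [compl_Ici]
      rw [setLIntegral_congr_fun measurableSet_Iio
        (fun ⦃y⦄ (hy : y ∈ Iio (0:ℝ)) => by rw [gammaPDF_of_neg hy, zero_mul])]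
      simp
    rw [hneg, add_zero, setLIntegral_congr Ioi_ae_eq_Ici.symm]
  rw [hsplit]
  have hC : (0:ℝ) ≤ r^m / Real.Gamma m := by
    have := Real.Gamma_pos_of_pos (show (0:ℝ) < m by exact_mod_cast hm)
    positivity
  have hcong : ∀ y ∈ Ioi (0:ℝ), gammaPDF m r y * ENNReal.ofReal (y^i * Real.exp (-(b*y)))
      = ENNReal.ofReal (r^m / Real.Gamma m)
          * ENNReal.ofReal (y^(m-1+i) * Real.exp (-((b+r)*y))) := by
    intro y hy
    have hy0 : 0 < y := hy
    rw [gammaPDF_of_nonneg hy0.le]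
    rw [← ENNReal.ofReal_mul (by positivity), ← ENNReal.ofReal_mul hC]
    congr 1
    have h1 : r ^ ((m:ℕ) : ℝ) = r ^ m := Real.rpow_natCast r m
    have h2 : y ^ (((m:ℕ) : ℝ) - 1) = y ^ (m-1) := by
      rw [show ((m:ℕ):ℝ) - 1 = ((m-1 : ℕ) : ℝ) by
        rw [Nat.cast_sub hm]; push_cast; ring, Real.rpow_natCast]
    have h3 : Real.exp (-(r*y)) * Real.exp (-(b*y)) = Real.exp (-((b+r)*y)) := by
      rw [← Real.exp_add]; ring_nf
    rw [h1, h2, pow_add]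
    calc r ^ m / Real.Gamma m * y ^ (m-1) * Real.exp (-(r*y)) * (y^i * Real.exp (-(b*y)))
        = r ^ m / Real.Gamma m * (y ^ (m-1) * y^i
            * (Real.exp (-(r*y)) * Real.exp (-(b*y)))) := by ring
      _ = r ^ m / Real.Gamma m * (y ^ (m-1) * y^i * Real.exp (-((b+r)*y))) := by rw [h3]
      _ = r ^ m / Real.Gamma m * (y ^ (m-1) * y ^ i * Real.exp (-((b+r)*y))) := rfl
  rw [setLIntegral_congr_fun measurableSet_Ioi hcong]
  have hbr : 0 < b + r := by positivity
  rw [lintegral_const_mul _ (by apply Measurable.ennreal_ofReal; fun_prop)]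
  rw [← ofReal_integral_eq_lintegral_ofReal (intble_pow_exp (m-1+i) hbr)
      ((ae_restrict_iff' measurableSet_Ioi).mpr (ae_of_all _ (fun y (hy : 0 < y) => by
        positivity)))]
  rw [int_pow_exp (m-1+i) hbr, ← ENNReal.ofReal_mul hC]

lemma expand_tail (mx : ℕ) (b c y z : ℝ) :
    Real.exp (-(b*(y+z+c))) * ∑ n ∈ range mx, (b*(y+z+c))^n / n.factorial
      = ∑ n ∈ range mx, ∑ i1 ∈ range (n+1), ∑ i2 ∈ range (n-i1+1),
          ((n.choose i1 : ℝ) * ((n-i1).choose i2 : ℝ) * b^n / n.factorial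
              * c^(n-i1-i2) * Real.exp (-(b*c)))
            * (y^i1 * Real.exp (-(b*y))) * (z^i2 * Real.exp (-(b*z))) := by
  rw [Finset.mul_sum]
  refine sum_congr rfl fun n _ => ?_
  have hexp : Real.exp (-(b*(y+z+c)))
      = Real.exp (-(b*y)) * Real.exp (-(b*z)) * Real.exp (-(b*c)) := by
    rw [← Real.exp_add, ← Real.exp_add]
    ring_nf
  have hpow : (b*(y+z+c))^n = b^n * (y+(z+c))^n := by
    rw [← mul_pow]
    ring_nf
  rw [hexp, hpow, add_pow]
  simp only [Finset.mul_sum, Finset.sum_mul, Finset.sum_div]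
  refine sum_congr rfl fun i1 hi1 => ?_
  rw [add_pow]
  simp only [Finset.mul_sum, Finset.sum_mul, Finset.sum_div]
  refine sum_congr rfl fun i2 hi2 => ?_
  ring

/-- Evaluation of χ₁: for independent Gamma variables `X, Y, Z`,
`P(X > θ(Y + Z + c))` in closed form. -/
theorem chi_one_closed_form
    {Ω : Type*} [MeasurableSpace Ω] (μ : Measure Ω) [IsProbabilityMeasure μ]
    (m_x m_y m_z : ℕ) (hmx : 0 < m_x) (hmy : 0 < m_y) (hmz : 0 < m_z)
    (s_x s_y s_z : ℝ) (hsx : 0 < s_x) (hsy : 0 < s_y) (hsz : 0 < s_z)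
    (X Y Z : Ω → ℝ) (hX : Measurable X) (hY : Measurable Y) (hZ : Measurable Z)
    (hXd : μ.map X = gammaMeasure m_x (1 / s_x))
    (hYd : μ.map Y = gammaMeasure m_y (1 / s_y))
    (hZd : μ.map Z = gammaMeasure m_z (1 / s_z))
    (hindep : iIndepFun ![X, Y, Z] μ)
    (θ c : ℝ) (hθ : 0 < θ) (hc : 0 < c) :
    (μ {ω | X ω > θ * (Y ω + Z ω + c)}).toReal =
      Real.exp (-(θ * c / s_x)) *
        ∑ n ∈ Finset.range m_x, ((θ / s_x) ^ n / (Nat.factorial n : ℝ)) *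
          ∑ i1 ∈ Finset.range (n + 1), ∑ i2 ∈ Finset.range (n - i1 + 1),
            (n.choose i1 : ℝ) * ((n - i1).choose i2 : ℝ) * c ^ (n - i1 - i2) *
            (Real.Gamma ((m_y : ℝ) + i1) / (Real.Gamma m_y * s_y ^ m_y)) *
            (θ / s_x + 1 / s_y) ^ (-((m_y : ℤ) + i1)) *
            (Real.Gamma ((m_z : ℝ) + i2) / (Real.Gamma m_z * s_z ^ m_z)) *
            (θ / s_x + 1 / s_z) ^ (-((m_z : ℤ) + i2)) := by
  have hmx' : (0:ℝ) < m_x := by exact_mod_cast hmx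
  have hmy' : (0:ℝ) < m_y := by exact_mod_cast hmy
  have hmz' : (0:ℝ) < m_z := by exact_mod_cast hmz
  haveI hPX : IsProbabilityMeasure (gammaMeasure m_x (1/s_x)) :=
    isProbabilityMeasure_gammaMeasure hmx' (by positivity)
  haveI hPY : IsProbabilityMeasure (gammaMeasure m_y (1/s_y)) :=
    isProbabilityMeasure_gammaMeasure hmy' (by positivity)
  haveI hPZ : IsProbabilityMeasure (gammaMeasure m_z (1/s_z)) :=
    isProbabilityMeasure_gammaMeasure hmz' (by positivity)
  have hmeas : ∀ i, Measurable (![X, Y, Z] i) := by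
    intro i
    fin_cases i
    · exact hX
    · exact hY
    · exact hZ
  -- independence facts
  have hWX : IndepFun (fun ω => (Y ω, Z ω)) X μ := by
    have := hindep.indepFun_prodMk hmeas 1 2 0 (by decide) (by decide)
    simpa using this
  have hYZ : IndepFun Y Z μ := by
    have := hindep.indepFun (show (1 : Fin 3) ≠ 2 by decide)
    simpa using this
  have hmapYZ : μ.map (fun ω => (Y ω, Z ω))
      = (gammaMeasure m_y (1/s_y)).prod (gammaMeasure m_z (1/s_z)) := by
    rw [← hYd, ← hZd]
    exact (indepFun_iff_map_prod_eq_prod_map_map hY.aemeasurable hZ.aemeasurable).mp hYZ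
  have hmapT : μ.map (fun ω => ((Y ω, Z ω), X ω))
      = ((gammaMeasure m_y (1/s_y)).prod (gammaMeasure m_z (1/s_z))).prod
          (gammaMeasure m_x (1/s_x)) := by
    rw [← hmapYZ, ← hXd]
    exact (indepFun_iff_map_prod_eq_prod_map_map (hY.prodMk hZ).aemeasurable
      hX.aemeasurable).mp hWX
  set s : Set ((ℝ × ℝ) × ℝ) := {p | θ * (p.1.1 + p.1.2 + c) < p.2} with hs_def
  have hs : MeasurableSet s := by
    apply measurableSet_lt
    · fun_prop
    · fun_prop
  have hE : {ω | X ω > θ * (Y ω + Z ω + c)}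
      = (fun ω => ((Y ω, Z ω), X ω)) ⁻¹' s := rfl
  rw [hE, ← Measure.map_apply ((hY.prodMk hZ).prodMk hX) hs, hmapT,
    Measure.prod_apply hs]
  -- null sets
  have hnullY : gammaMeasure (m_y:ℝ) (1/s_y) (Iio 0) = 0 := by
    rw [gammaMeasure, withDensity_apply _ measurableSet_Iio]
    exact lintegral_gammaPDF_of_nonpos le_rfl
  have hnullZ : gammaMeasure (m_z:ℝ) (1/s_z) (Iio 0) = 0 := by
    rw [gammaMeasure, withDensity_apply _ measurableSet_Iio]
    exact lintegral_gammaPDF_of_nonpos le_rfl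
  have hae : ∀ᵐ yz ∂((gammaMeasure m_y (1/s_y)).prod (gammaMeasure m_z (1/s_z))),
      0 ≤ yz.1 ∧ 0 ≤ yz.2 := by
    rw [ae_iff]
    have hsub : {yz : ℝ × ℝ | ¬(0 ≤ yz.1 ∧ 0 ≤ yz.2)}
        ⊆ (Set.Iio 0 ×ˢ (Set.univ : Set ℝ)) ∪ ((Set.univ : Set ℝ) ×ˢ Set.Iio 0) := by
      intro yz hyz
      simp only [mem_setOf_eq, not_and_or, not_le] at hyz
      rcases hyz with h | h
      · exact Or.inl ⟨h, Set.mem_univ _⟩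
      · exact Or.inr ⟨Set.mem_univ _, h⟩
    refine measure_mono_null hsub (measure_union_null ?_ ?_)
    · rw [Measure.prod_prod, hnullY, zero_mul]
    · rw [Measure.prod_prod, hnullZ, mul_zero]
  set b := θ / s_x with hb_def
  have hbpos : 0 < b := by positivity
  set K : ℕ → ℕ → ℕ → ℝ := fun n i1 i2 =>
    (n.choose i1 : ℝ) * ((n-i1).choose i2 : ℝ) * b^n / n.factorial
      * c^(n-i1-i2) * Real.exp (-(b*c)) with hK_def
  have hKnn : ∀ n i1 i2, 0 ≤ K n i1 i2 := fun n i1 i2 => by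
    rw [hK_def]; positivity
  set Vy : ℕ → ℝ := fun i => (1/s_y)^m_y / Real.Gamma m_y
      * ((m_y-1+i).factorial / (b+1/s_y)^(m_y-1+i+1)) with hVy_def
  set Vz : ℕ → ℝ := fun i => (1/s_z)^m_z / Real.Gamma m_z
      * ((m_z-1+i).factorial / (b+1/s_z)^(m_z-1+i+1)) with hVz_def
  have hGy := Real.Gamma_pos_of_pos hmy'
  have hGz := Real.Gamma_pos_of_pos hmz'
  have hVynn : ∀ i, 0 ≤ Vy i := fun i => by
    rw [hVy_def]
    have h1 : 0 < b + 1/s_y := by positivity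
    positivity
  have hVznn : ∀ i, 0 ≤ Vz i := fun i => by
    rw [hVz_def]
    have h1 : 0 < b + 1/s_z := by positivity
    positivity
  -- pointwise tail formula
  have hcong : ∀ᵐ yz ∂((gammaMeasure m_y (1/s_y)).prod (gammaMeasure m_z (1/s_z))),
      gammaMeasure m_x (1/s_x) (Prod.mk yz ⁻¹' s)
        = ∑ n ∈ range m_x, ∑ i1 ∈ range (n+1), ∑ i2 ∈ range (n-i1+1),
            ENNReal.ofReal (K n i1 i2)
              * ENNReal.ofReal (yz.1^i1 * Real.exp (-(b*yz.1)))
              * ENNReal.ofReal (yz.2^i2 * Real.exp (-(b*yz.2))) := by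
    filter_upwards [hae] with yz hyz
    obtain ⟨hy, hz⟩ := hyz
    have ht : 0 ≤ θ * (yz.1 + yz.2 + c) := by positivity
    have hpre : Prod.mk yz ⁻¹' s = Ioi (θ * (yz.1 + yz.2 + c)) := rfl
    rw [hpre, gammaMeasure_Ioi m_x hmx (by positivity) ht]
    have harg : (1/s_x) * (θ * (yz.1 + yz.2 + c)) = b * (yz.1 + yz.2 + c) := by
      rw [hb_def]; ring
    rw [harg, expand_tail m_x b c yz.1 yz.2]
    have hterm : ∀ n i1 i2 : ℕ, 0 ≤ K n i1 i2
        * (yz.1^i1 * Real.exp (-(b*yz.1))) * (yz.2^i2 * Real.exp (-(b*yz.2))) :=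
      fun n i1 i2 => mul_nonneg (mul_nonneg (hKnn n i1 i2)
        (mul_nonneg (pow_nonneg hy _) (Real.exp_pos _).le))
        (mul_nonneg (pow_nonneg hz _) (Real.exp_pos _).le)
    rw [ENNReal.ofReal_sum_of_nonneg (fun n _ => Finset.sum_nonneg fun i1 _ =>
      Finset.sum_nonneg fun i2 _ => hterm n i1 i2)]
    refine sum_congr rfl fun n _ => ?_
    rw [ENNReal.ofReal_sum_of_nonneg (fun i1 _ => Finset.sum_nonneg fun i2 _ => hterm n i1 i2)]
    refine sum_congr rfl fun i1 _ => ?_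
    rw [ENNReal.ofReal_sum_of_nonneg (fun i2 _ => hterm n i1 i2)]
    refine sum_congr rfl fun i2 _ => ?_
    rw [ENNReal.ofReal_mul (mul_nonneg (hKnn n i1 i2)
      (mul_nonneg (pow_nonneg hy _) (Real.exp_pos _).le)),
      ENNReal.ofReal_mul (hKnn n i1 i2)]
  rw [lintegral_congr_ae hcong]
  -- evaluate the triple-sum lintegral
  have hmf : ∀ i : ℕ, Measurable (fun u : ℝ => ENNReal.ofReal (u^i * Real.exp (-(b*u)))) :=
    fun i => by apply Measurable.ennreal_ofReal; fun_prop
  have hterm_int : ∀ n i1 i2 : ℕ,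
      ∫⁻ yz, (ENNReal.ofReal (K n i1 i2)
          * ENNReal.ofReal (yz.1^i1 * Real.exp (-(b*yz.1)))
          * ENNReal.ofReal (yz.2^i2 * Real.exp (-(b*yz.2))))
        ∂((gammaMeasure m_y (1/s_y)).prod (gammaMeasure m_z (1/s_z)))
      = ENNReal.ofReal (K n i1 i2 * (Vy i1 * Vz i2)) := by
    intro n i1 i2
    simp_rw [mul_assoc]
    have hfg : Measurable (fun yz : ℝ × ℝ =>
        ENNReal.ofReal (yz.1^i1 * Real.exp (-(b*yz.1)))
          * ENNReal.ofReal (yz.2^i2 * Real.exp (-(b*yz.2)))) :=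
      ((hmf i1).comp measurable_fst).mul ((hmf i2).comp measurable_snd)
    rw [lintegral_const_mul _ hfg]
    rw [lintegral_prod_mul (hmf i1).aemeasurable (hmf i2).aemeasurable]
    rw [gamma_moment m_y i1 hmy (by positivity) hbpos,
      gamma_moment m_z i2 hmz (by positivity) hbpos]
    rw [← ENNReal.ofReal_mul (by
      have h1 : 0 < b + 1/s_y := by positivity
      positivity)]
    rw [← ENNReal.ofReal_mul (hKnn n i1 i2)]
  have hLmeas : ∀ n i1 i2 : ℕ, Measurable (fun yz : ℝ × ℝ =>
      ENNReal.ofReal (K n i1 i2)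
        * ENNReal.ofReal (yz.1^i1 * Real.exp (-(b*yz.1)))
        * ENNReal.ofReal (yz.2^i2 * Real.exp (-(b*yz.2)))) :=
    fun n i1 i2 => (measurable_const.mul ((hmf i1).comp measurable_fst)).mul
      ((hmf i2).comp measurable_snd)
  rw [lintegral_finset_sum _ (fun n _ => Finset.measurable_sum _ fun i1 _ =>
    Finset.measurable_sum _ fun i2 _ => hLmeas n i1 i2)]
  have hswap : ∀ n ∈ range m_x,
      ∫⁻ yz, (∑ i1 ∈ range (n+1), ∑ i2 ∈ range (n-i1+1),
          ENNReal.ofReal (K n i1 i2)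
            * ENNReal.ofReal (yz.1^i1 * Real.exp (-(b*yz.1)))
            * ENNReal.ofReal (yz.2^i2 * Real.exp (-(b*yz.2))))
        ∂((gammaMeasure m_y (1/s_y)).prod (gammaMeasure m_z (1/s_z)))
      = ∑ i1 ∈ range (n+1), ∑ i2 ∈ range (n-i1+1),
          ENNReal.ofReal (K n i1 i2 * (Vy i1 * Vz i2)) := by
    intro n _
    rw [lintegral_finset_sum _ (fun i1 _ => Finset.measurable_sum _ fun i2 _ => hLmeas n i1 i2)]
    refine sum_congr rfl fun i1 _ => ?_
    rw [lintegral_finset_sum _ (fun i2 _ => hLmeas n i1 i2)]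
    exact sum_congr rfl fun i2 _ => hterm_int n i1 i2
  rw [Finset.sum_congr rfl hswap]
  -- back to reals
  have htnn : ∀ n i1 i2 : ℕ, 0 ≤ K n i1 i2 * (Vy i1 * Vz i2) :=
    fun n i1 i2 => mul_nonneg (hKnn n i1 i2) (mul_nonneg (hVynn i1) (hVznn i2))
  have hofsum : (∑ n ∈ range m_x, ∑ i1 ∈ range (n+1), ∑ i2 ∈ range (n-i1+1),
      ENNReal.ofReal (K n i1 i2 * (Vy i1 * Vz i2)))
      = ENNReal.ofReal (∑ n ∈ range m_x, ∑ i1 ∈ range (n+1), ∑ i2 ∈ range (n-i1+1),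
          K n i1 i2 * (Vy i1 * Vz i2)) := by
    rw [ENNReal.ofReal_sum_of_nonneg (fun n _ => Finset.sum_nonneg fun i1 _ =>
      Finset.sum_nonneg fun i2 _ => htnn n i1 i2)]
    refine sum_congr rfl fun n _ => ?_
    rw [ENNReal.ofReal_sum_of_nonneg (fun i1 _ => Finset.sum_nonneg fun i2 _ => htnn n i1 i2)]
    refine sum_congr rfl fun i1 _ => ?_
    rw [ENNReal.ofReal_sum_of_nonneg (fun i2 _ => htnn n i1 i2)]
  rw [hofsum, ENNReal.toReal_ofReal (Finset.sum_nonneg fun n _ => Finset.sum_nonneg fun i1 _ =>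
    Finset.sum_nonneg fun i2 _ => htnn n i1 i2)]
  -- final real algebra
  rw [Finset.mul_sum]
  refine sum_congr rfl fun n _ => ?_
  rw [Finset.mul_sum, Finset.mul_sum]
  refine sum_congr rfl fun i1 _ => ?_
  rw [Finset.mul_sum, Finset.mul_sum]
  refine sum_congr rfl fun i2 _ => ?_
  have hGyfact : ((m_y-1+i1).factorial : ℝ) = Real.Gamma ((m_y:ℝ) + i1) := by
    rw [← Real.Gamma_nat_eq_factorial (m_y-1+i1)]
    congr 1
    push_cast [Nat.cast_sub (Nat.one_le_iff_ne_zero.mpr hmy.ne')]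
    ring
  have hGzfact : ((m_z-1+i2).factorial : ℝ) = Real.Gamma ((m_z:ℝ) + i2) := by
    rw [← Real.Gamma_nat_eq_factorial (m_z-1+i2)]
    congr 1
    push_cast [Nat.cast_sub (Nat.one_le_iff_ne_zero.mpr hmz.ne')]
    ring
  have hEy : (b + 1/s_y) ^ (-((m_y:ℤ) + i1)) = 1/(b + 1/s_y)^(m_y-1+i1+1) := by
    rw [show m_y-1+i1+1 = m_y+i1 by omega,
      show -((m_y:ℤ) + i1) = -((m_y+i1 : ℕ) : ℤ) by push_cast; ring,
      zpow_neg, zpow_natCast]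
    exact (one_div _).symm
  have hEz : (b + 1/s_z) ^ (-((m_z:ℤ) + i2)) = 1/(b + 1/s_z)^(m_z-1+i2+1) := by
    rw [show m_z-1+i2+1 = m_z+i2 by omega,
      show -((m_z:ℤ) + i2) = -((m_z+i2 : ℕ) : ℤ) by push_cast; ring,
      zpow_neg, zpow_natCast]
    exact (one_div _).symm
  have hexpc : Real.exp (-(θ * c / s_x)) = Real.exp (-(b * c)) := by
    rw [hb_def]; ring_nf
  rw [hK_def, hVy_def, hVz_def]
  beta_reduce
  rw [hGyfact, hGzfact, hEy, hEz, hexpc]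
  ring
end

section
/- Let m_w, m_z be positive integers, s_w, s_z > 0, and let W, Z be independent random variables, Gamma-distributed with shapes m_w, m_z and scales s_w, s_z respectively. Then for any theta > 0: P( W > theta*(Z + 1) ) = exp( - theta/s_w ) * sum_{k=0}^{m_w-1} [ (theta/s_w)^k / k! ] * sum_{k1=0}^{k} C(k,k1) * [ Gamma(m_z + k1) / (Gamma(m_z) * s_z^{m_z}) ] * ( theta/s_w + 1/s_z )^{-(m_z+k1)}, where C(k,k1) denotes the binomial coefficient and Gamma is the Gamma function. -/
open MeasureTheory ProbabilityTheory Real Finset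

open Set Filter Topology

lemma aux_integrable (n : ℕ) {c : ℝ} (hc : 0 < c) (a : ℝ) :
    IntegrableOn (fun z : ℝ => z ^ n * Real.exp (-(c * z))) (Set.Ioi a) := by
  apply integrable_of_isBigO_exp_neg (b := c / 2) (by linarith)
  · exact ((continuous_pow n).mul ((continuous_const.mul continuous_id).neg.rexp)).continuousOn
  · have h1 : Filter.Tendsto (fun z : ℝ => z ^ n * Real.exp (-(c / 2 * z))) atTop (𝓝 0) := by
      have h2 : Filter.Tendsto (fun z : ℝ => (c / 2 * z) ^ n * Real.exp (-(c / 2 * z)))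
          atTop (𝓝 0) :=
        (tendsto_pow_mul_exp_neg_atTop_nhds_zero n).comp
          (Filter.tendsto_id.const_mul_atTop (by linarith))
      have h3 := h2.const_mul ((2 / c) ^ n)
      rw [mul_zero] at h3
      refine h3.congr (fun z => ?_)
      rw [← mul_assoc, ← mul_pow]
      congr 2
      field_simp
    have := (h1.isBigO_one ℝ).mul
      (Asymptotics.isBigO_refl (fun z : ℝ => Real.exp (-(c/2) * z)) atTop)
    refine this.congr (fun z => ?_) (fun z => one_mul _)
    rw [mul_assoc, ← Real.exp_add]
    ring_nf

lemma aux_integral (n : ℕ) {c : ℝ} (hc : 0 < c) :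
    ∫ z in Set.Ioi (0:ℝ), z ^ n * Real.exp (-(c * z)) = Real.Gamma (n + 1) / c ^ (n + 1) := by
  have heq : ∀ z ∈ Set.Ioi (0:ℝ), z ^ n * Real.exp (-(c * z)) =
      z ^ ((n:ℝ) + 1 - 1) * Real.exp (-(c * z)) := by
    intro z _
    rw [show ((n:ℝ) + 1 - 1) = (n:ℝ) by ring, Real.rpow_natCast]
  rw [setIntegral_congr_fun measurableSet_Ioi heq,
    Real.integral_rpow_mul_exp_neg_mul_Ioi (by positivity) hc,
    show ((n:ℝ) + 1) = ((n + 1 : ℕ) : ℝ) by push_cast; ring, Real.rpow_natCast,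
    div_pow, one_pow]
  ring

lemma aux_surv (m : ℕ) (hm : 0 < m) {r : ℝ} (hr : 0 < r) {x : ℝ} (hx : 0 ≤ x) :
    ∫ y in Set.Ioi x, gammaPDFReal m r y =
      Real.exp (-(r * x)) * ∑ k ∈ Finset.range m, (r * x) ^ k / (Nat.factorial k : ℝ) := by
  obtain ⟨n, rfl⟩ : ∃ n, m = n + 1 := ⟨m - 1, (Nat.succ_pred_eq_of_pos hm).symm⟩
  set F : ℝ → ℝ := fun x =>
    -(Real.exp (-(r * x)) * ∑ k ∈ Finset.range (n + 1), (r * x) ^ k / (Nat.factorial k : ℝ))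
    with hF
  set g : ℝ → ℝ := fun y => r ^ (n + 1) / (Nat.factorial n : ℝ) * y ^ n * Real.exp (-(r * y))
    with hg
  have hrx : ∀ y : ℝ, HasDerivAt (fun t : ℝ => r * t) r y := fun y => by
    simpa using (hasDerivAt_id y).const_mul r
  have hderiv : ∀ y : ℝ, HasDerivAt F (g y) y := by
    intro y
    have hsum : HasDerivAt
        (fun t : ℝ => ∑ k ∈ Finset.range (n + 1), (r * t) ^ k / (Nat.factorial k : ℝ))
        (∑ k ∈ Finset.range (n + 1), ((k : ℝ) * (r * y) ^ (k - 1) * r) / (Nat.factorial k : ℝ))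
        y :=
      HasDerivAt.fun_sum fun k _ => (((hasDerivAt_pow k (r * y)).comp y (hrx y)).div_const _)
    have hsum_eq : (∑ k ∈ Finset.range (n + 1),
        ((k : ℝ) * (r * y) ^ (k - 1) * r) / (Nat.factorial k : ℝ)) =
        r * ∑ k ∈ Finset.range n, (r * y) ^ k / (Nat.factorial k : ℝ) := by
      rw [Finset.sum_range_succ']
      simp only [Nat.cast_zero, zero_mul, Nat.factorial_zero, Nat.cast_one, Nat.cast_add,
        Nat.add_sub_cancel, zero_div, add_zero, Finset.mul_sum]
      refine Finset.sum_congr rfl fun k _ => ?_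
      rw [Nat.factorial_succ]
      have hfk : ((Nat.factorial k : ℝ)) ≠ 0 := by positivity
      push_cast
      field_simp
    rw [hsum_eq] at hsum
    have hexp := ((hrx y).neg).exp
    have := (hexp.mul hsum).neg
    convert this using 1
    case e'_4 => rfl
    case e'_5 => rfl
    case e'_8 => rfl
    rw [hg]
    simp only [Pi.neg_apply]
    rw [Finset.sum_range_succ, mul_pow]
    ring
  have hcont : ContinuousWithinAt F (Set.Ici x) x := (hderiv x).continuousAt.continuousWithinAt
  have hint : IntegrableOn g (Set.Ioi x) := by
    have := (aux_integrable n hr x).const_mul (r ^ (n + 1) / (Nat.factorial n : ℝ))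
    refine this.congr (ae_of_all _ fun y => by ring)
  have htend : Filter.Tendsto F atTop (𝓝 0) := by
    have hterm : ∀ k : ℕ, Filter.Tendsto
        (fun t : ℝ => Real.exp (-(r * t)) * ((r * t) ^ k / (Nat.factorial k : ℝ)))
        atTop (𝓝 0) := by
      intro k
      have h2 : Filter.Tendsto (fun t : ℝ => (r * t) ^ k * Real.exp (-(r * t))) atTop (𝓝 0) := by
        have := (tendsto_pow_mul_exp_neg_atTop_nhds_zero k).comp
          (Filter.tendsto_id.const_mul_atTop hr)
        exact this.congr fun t => rfl
      have := h2.div_const (Nat.factorial k : ℝ)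
      rw [zero_div] at this
      exact this.congr fun t => by ring
    have hsum := tendsto_finset_sum (Finset.range (n + 1)) (fun k _ => hterm k)
    rw [Finset.sum_const_zero] at hsum
    have : Filter.Tendsto (fun t : ℝ =>
        Real.exp (-(r * t)) * ∑ k ∈ Finset.range (n + 1), (r * t) ^ k / (Nat.factorial k : ℝ))
        atTop (𝓝 0) := hsum.congr fun t => by rw [Finset.mul_sum]
    simpa [hF] using this.neg
  have key := integral_Ioi_of_hasDerivAt_of_tendsto hcont (fun y _ => hderiv y) hint htend
  have heq : ∀ y ∈ Set.Ioi x, gammaPDFReal (n + 1) r y = g y := by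
    intro y hy
    have hy0 : 0 < y := lt_of_le_of_lt hx hy
    rw [gammaPDFReal, if_pos hy0.le, hg]
    simp only
    rw [Real.Gamma_nat_eq_factorial,
      show ((n:ℝ) + 1) = ((n + 1 : ℕ) : ℝ) by push_cast; ring,
      show ((n + 1 : ℕ) : ℝ) - 1 = ((n : ℕ) : ℝ) by push_cast; ring,
      Real.rpow_natCast, Real.rpow_natCast]
  push_cast
  rw [setIntegral_congr_fun measurableSet_Ioi heq, key, hF]
  simp only [zero_sub, neg_neg]

lemma aux_pdf_integrableOn (m : ℕ) (hm : 0 < m) {r : ℝ} (hr : 0 < r) (s : Set ℝ) :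
    IntegrableOn (gammaPDFReal m r) s := by
  refine ⟨(measurable_gammaPDFReal m r).aestronglyMeasurable.restrict, ?_⟩
  rw [hasFiniteIntegral_iff_ofReal (ae_of_all _ fun y =>
    gammaPDFReal_nonneg (by positivity) hr y)]
  calc ∫⁻ y in s, ENNReal.ofReal (gammaPDFReal m r y)
      ≤ ∫⁻ y, ENNReal.ofReal (gammaPDFReal m r y) := setLIntegral_le_lintegral _ _
    _ = 1 := lintegral_gammaPDF_eq_one (by positivity) hr
    _ < ⊤ := ENNReal.one_lt_top

lemma aux_surv_meas (m : ℕ) (hm : 0 < m) {r : ℝ} (hr : 0 < r) {x : ℝ} (hx : 0 ≤ x) :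
    gammaMeasure m r (Set.Ioi x) =
      ENNReal.ofReal
        (Real.exp (-(r * x)) * ∑ k ∈ Finset.range m, (r * x) ^ k / (Nat.factorial k : ℝ)) := by
  rw [gammaMeasure, withDensity_apply _ measurableSet_Ioi, ← aux_surv m hm hr hx]
  exact (ofReal_integral_eq_lintegral_ofReal (aux_pdf_integrableOn m hm hr _)
    (ae_of_all _ fun y => gammaPDFReal_nonneg (by positivity) hr y)).symm

lemma aux_pointwise (m_w m_z : ℕ) (hmz : 0 < m_z) (r q θ : ℝ) {z : ℝ} (hz : 0 ≤ z) :
    gammaPDFReal m_z q z *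
      (Real.exp (-(r * (θ * (z + 1)))) *
        ∑ k ∈ Finset.range m_w, (r * (θ * (z + 1))) ^ k / (Nat.factorial k : ℝ)) =
    ∑ k ∈ Finset.range m_w, ∑ k1 ∈ Finset.range (k + 1),
      (q ^ m_z / (Nat.factorial (m_z - 1) : ℝ) * Real.exp (-(r * θ)) *
          ((r * θ) ^ k / (Nat.factorial k : ℝ)) * (k.choose k1 : ℝ)) *
        (z ^ (m_z - 1 + k1) * Real.exp (-((q + r * θ) * z))) := by
  have h1 : ((m_z : ℝ)) - 1 = ((m_z - 1 : ℕ) : ℝ) := by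
    rw [Nat.cast_sub hmz]; simp
  have hGamma : Real.Gamma (m_z : ℝ) = (Nat.factorial (m_z - 1) : ℝ) := by
    rw [show ((m_z : ℝ)) = ((m_z - 1 : ℕ) : ℝ) + 1 by rw [← h1]; ring,
      Real.Gamma_nat_eq_factorial]
  rw [gammaPDFReal, if_pos hz, hGamma, h1, Real.rpow_natCast, Real.rpow_natCast]
  have hE : Real.exp (-(q * z)) * Real.exp (-(r * θ * (z + 1))) =
      Real.exp (-(r * θ)) * Real.exp (-((q + r * θ) * z)) := by
    rw [← Real.exp_add, ← Real.exp_add]; ring_nf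
  rw [Finset.mul_sum, Finset.mul_sum]
  apply Finset.sum_congr rfl
  intro k _
  rw [show r * (θ * (z + 1)) = r * θ * (z + 1) by ring, mul_pow, add_pow]
  simp only [one_pow, mul_one, Finset.mul_sum, Finset.sum_div]
  apply Finset.sum_congr rfl
  intro k1 _
  linear_combination (q ^ m_z / (Nat.factorial (m_z - 1) : ℝ) *
    ((r * θ) ^ k * (z ^ (m_z - 1) * (z ^ k1 *
      ((k.choose k1 : ℝ) / (Nat.factorial k : ℝ)))))) * hE

/-- Evaluation of χ₂: for independent Gamma variables `W, Z`,
`P(W > θ(Z + 1))` in closed form. -/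
theorem chi_two_closed_form
    {Ω : Type*} [MeasurableSpace Ω] (μ : Measure Ω) [IsProbabilityMeasure μ]
    (m_w m_z : ℕ) (hmw : 0 < m_w) (hmz : 0 < m_z)
    (s_w s_z : ℝ) (hsw : 0 < s_w) (hsz : 0 < s_z)
    (W Z : Ω → ℝ) (hW : Measurable W) (hZ : Measurable Z)
    (hWd : μ.map W = gammaMeasure m_w (1 / s_w))
    (hZd : μ.map Z = gammaMeasure m_z (1 / s_z))
    (hindep : IndepFun W Z μ)
    (θ : ℝ) (hθ : 0 < θ) :
    (μ {ω | W ω > θ * (Z ω + 1)}).toReal =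
      Real.exp (-(θ / s_w)) *
        ∑ k ∈ Finset.range m_w, ((θ / s_w) ^ k / (Nat.factorial k : ℝ)) *
          ∑ k1 ∈ Finset.range (k + 1),
            (k.choose k1 : ℝ) *
            (Real.Gamma ((m_z : ℝ) + k1) / (Real.Gamma m_z * s_z ^ m_z)) *
            (θ / s_w + 1 / s_z) ^ (-((m_z : ℤ) + k1)) := by
  have hr : (0:ℝ) < 1 / s_w := by positivity
  have hq : (0:ℝ) < 1 / s_z := by positivity
  have hB : (0:ℝ) < 1 / s_z + 1 / s_w * θ := by positivity
  haveI hPW : IsProbabilityMeasure (gammaMeasure m_w (1 / s_w)) :=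
    isProbabilityMeasure_gammaMeasure (by positivity) hr
  haveI hPZ : IsProbabilityMeasure (gammaMeasure m_z (1 / s_z)) :=
    isProbabilityMeasure_gammaMeasure (by positivity) hq
  set T : ℝ → ℝ := fun z => ∑ k ∈ Finset.range m_w, ∑ k1 ∈ Finset.range (k + 1),
      ((1/s_z) ^ m_z / (Nat.factorial (m_z - 1) : ℝ) * Real.exp (-(1/s_w * θ)) *
          ((1/s_w * θ) ^ k / (Nat.factorial k : ℝ)) * (k.choose k1 : ℝ)) *
        (z ^ (m_z - 1 + k1) * Real.exp (-((1/s_z + 1/s_w * θ) * z))) with hTdef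
  have hs : MeasurableSet {p : ℝ × ℝ | θ * (p.1 + 1) < p.2} :=
    measurableSet_lt (by fun_prop) (by fun_prop)
  -- step 1: joint law
  have hmap : μ.map (fun ω => (Z ω, W ω)) =
      (gammaMeasure m_z (1/s_z)).prod (gammaMeasure m_w (1/s_w)) := by
    rw [← hZd, ← hWd]
    exact (ProbabilityTheory.indepFun_iff_map_prod_eq_prod_map_map hZ.aemeasurable
      hW.aemeasurable).1 hindep.symm
  have h1 : μ {ω | W ω > θ * (Z ω + 1)} =
      (gammaMeasure m_z (1/s_z)).prod (gammaMeasure m_w (1/s_w))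
        {p : ℝ × ℝ | θ * (p.1 + 1) < p.2} := by
    rw [← hmap, Measure.map_apply (hZ.prodMk hW) hs]
    rfl
  have hmeasg : Measurable fun z : ℝ => gammaMeasure m_w (1/s_w) (Set.Ioi (θ * (z + 1))) := by
    have hA : Antitone fun x : ℝ => gammaMeasure m_w (1/s_w) (Set.Ioi x) :=
      fun a b hab => measure_mono (Set.Ioi_subset_Ioi hab)
    exact hA.measurable.comp ((measurable_id.add_const 1).const_mul θ)
  have h2 : (gammaMeasure m_z (1/s_z)).prod (gammaMeasure m_w (1/s_w))
        {p : ℝ × ℝ | θ * (p.1 + 1) < p.2} =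
      ∫⁻ z, gammaMeasure m_w (1/s_w) (Set.Ioi (θ * (z + 1))) ∂(gammaMeasure m_z (1/s_z)) := by
    rw [Measure.prod_apply hs]
    rfl
  have h3 : (∫⁻ z, gammaMeasure m_w (1/s_w) (Set.Ioi (θ * (z + 1)))
        ∂(gammaMeasure m_z (1/s_z))) =
      ∫⁻ z, gammaPDF m_z (1/s_z) z * gammaMeasure m_w (1/s_w) (Set.Ioi (θ * (z + 1))) := by
    exact lintegral_withDensity_eq_lintegral_mul volume
      (measurable_gammaPDFReal m_z (1/s_z)).ennreal_ofReal hmeasg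
  have h4 : (∫⁻ z, gammaPDF m_z (1/s_z) z * gammaMeasure m_w (1/s_w) (Set.Ioi (θ * (z + 1)))) =
      ∫⁻ z in Set.Ici (0:ℝ),
        gammaPDF m_z (1/s_z) z * gammaMeasure m_w (1/s_w) (Set.Ioi (θ * (z + 1))) := by
    rw [← lintegral_add_compl (μ := volume)
      (fun z => gammaPDF m_z (1/s_z) z * gammaMeasure m_w (1/s_w) (Set.Ioi (θ * (z + 1))))
      measurableSet_Ici, compl_Ici]
    have : (∫⁻ z in Set.Iio (0:ℝ),
        gammaPDF m_z (1/s_z) z * gammaMeasure m_w (1/s_w) (Set.Ioi (θ * (z + 1)))) = 0 := by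
      rw [setLIntegral_congr_fun_ae measurableSet_Iio
        (ae_of_all _ fun z (hz : z < 0) => by rw [gammaPDF_of_neg hz, zero_mul])]
      simp
    rw [this, add_zero]
  have h5 : (∫⁻ z in Set.Ici (0:ℝ),
        gammaPDF m_z (1/s_z) z * gammaMeasure m_w (1/s_w) (Set.Ioi (θ * (z + 1)))) =
      ∫⁻ z in Set.Ici (0:ℝ), ENNReal.ofReal (T z) := by
    refine setLIntegral_congr_fun_ae measurableSet_Ici (ae_of_all _ fun z (hz : 0 ≤ z) => ?_)
    have hx : 0 ≤ θ * (z + 1) := by positivity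
    rw [aux_surv_meas m_w hmw hr hx, gammaPDF,
      ← ENNReal.ofReal_mul (gammaPDFReal_nonneg (by positivity) hq z),
      aux_pointwise m_w m_z hmz (1/s_w) (1/s_z) θ hz, hTdef]
  have hTint : IntegrableOn T (Set.Ioi (0:ℝ)) := by
    refine integrable_finset_sum _ fun k _ => integrable_finset_sum _ fun k1 _ => ?_
    exact (aux_integrable (m_z - 1 + k1) hB 0).const_mul _
  have hTnonneg : ∀ z ∈ Set.Ici (0:ℝ), 0 ≤ T z := by
    intro z hz
    refine Finset.sum_nonneg fun k _ => Finset.sum_nonneg fun k1 _ => ?_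
    have h0z : (0:ℝ) ≤ z := hz
    have := Real.exp_pos (-(1/s_w * θ))
    positivity
  have h6 : (∫⁻ z in Set.Ici (0:ℝ), ENNReal.ofReal (T z)) =
      ENNReal.ofReal (∫ z in Set.Ici (0:ℝ), T z) := by
    refine (ofReal_integral_eq_lintegral_ofReal
      (Iff.mpr integrableOn_Ici_iff_integrableOn_Ioi hTint) ?_).symm
    exact (ae_restrict_iff' measurableSet_Ici).2 (ae_of_all _ hTnonneg)
  have h7 : (∫ z in Set.Ici (0:ℝ), T z) =
      ∑ k ∈ Finset.range m_w, ∑ k1 ∈ Finset.range (k + 1),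
        ((1/s_z) ^ m_z / (Nat.factorial (m_z - 1) : ℝ) * Real.exp (-(1/s_w * θ)) *
            ((1/s_w * θ) ^ k / (Nat.factorial k : ℝ)) * (k.choose k1 : ℝ)) *
          (Real.Gamma ((m_z - 1 + k1 : ℕ) + 1) / (1/s_z + 1/s_w * θ) ^ (m_z - 1 + k1 + 1)) := by
    rw [integral_Ici_eq_integral_Ioi, hTdef]
    rw [integral_finset_sum _ fun k _ => integrable_finset_sum _ fun k1 _ =>
      (aux_integrable (m_z - 1 + k1) hB 0).const_mul _]
    refine Finset.sum_congr rfl fun k _ => ?_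
    rw [integral_finset_sum _ fun k1 _ => (aux_integrable (m_z - 1 + k1) hB 0).const_mul _]
    refine Finset.sum_congr rfl fun k1 _ => ?_
    rw [integral_const_mul, aux_integral (m_z - 1 + k1) hB]
  have hμ : μ {ω | W ω > θ * (Z ω + 1)} = ENNReal.ofReal (∫ z in Set.Ici (0:ℝ), T z) := by
    rw [h1, h2, h3, h4, h5, h6]
  rw [hμ, ENNReal.toReal_ofReal (setIntegral_nonneg measurableSet_Ici hTnonneg), h7]
  -- final algebra
  rw [Finset.mul_sum]
  refine Finset.sum_congr rfl fun k _ => ?_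
  rw [Finset.mul_sum, Finset.mul_sum]
  refine Finset.sum_congr rfl fun k1 _ => ?_
  have hc1 : ((m_z - 1 + k1 : ℕ) : ℝ) + 1 = (m_z : ℝ) + k1 := by
    have h : (m_z - 1 + k1) + 1 = m_z + k1 := by omega
    calc ((m_z - 1 + k1 : ℕ) : ℝ) + 1 = (((m_z - 1 + k1) + 1 : ℕ) : ℝ) := by push_cast; ring
      _ = ((m_z + k1 : ℕ) : ℝ) := by rw [h]
      _ = (m_z : ℝ) + k1 := by push_cast; ring
  have hGamma : Real.Gamma (m_z : ℝ) = (Nat.factorial (m_z - 1) : ℝ) := by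
    rw [show ((m_z : ℝ)) = ((m_z - 1 : ℕ) : ℝ) + 1 by
      rw [Nat.cast_sub hmz]; push_cast; ring, Real.Gamma_nat_eq_factorial]
  have hzpow : (θ / s_w + 1 / s_z) ^ (-((m_z : ℤ) + k1)) =
      ((θ / s_w + 1 / s_z) ^ (m_z + k1 : ℕ))⁻¹ := by
    rw [show -((m_z : ℤ) + k1) = -((m_z + k1 : ℕ) : ℤ) by push_cast; ring, zpow_neg,
      zpow_natCast]
  rw [hc1, hGamma, hzpow, show m_z - 1 + k1 + 1 = m_z + k1 from by omega,
    show (1/s_z + 1/s_w * θ) = (θ / s_w + 1 / s_z) by ring,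
    show (1/s_w * θ) = θ / s_w by ring]
  have hfk : ((Nat.factorial k : ℝ)) ≠ 0 := by positivity
  have hfm : ((Nat.factorial (m_z - 1) : ℝ)) ≠ 0 := by positivity
  have hBne : (θ / s_w + 1 / s_z) ^ (m_z + k1 : ℕ) ≠ 0 := by positivity
  have hszne : s_z ^ m_z ≠ 0 := by positivity
  field_simp
  ring_nf
  rw [← mul_pow, mul_inv_cancel₀ hsz.ne', one_pow, one_mul]
end

section
/- Let m_x, m_y, m_z, m_w be positive integers, s_x, s_y, s_z, s_w > 0, and let X, Y, Z, Z', W be mutually independent random variables, where X, Y, W are Gamma-distributed with shapes m_x, m_y, m_w and scales s_x, s_y, s_w, and Z and Z' are both Gamma-distributed with shape m_z and scale s_z. Let Theta > 0, gamma_R > 0, c > 0, and set theta = Theta/gamma_R. Then the cumulative distribution function of the (upper-bounded) secondary SINR gamma^up = gamma_R * min( X/(Z + Y + c), W/(Z' + 1) ) at Theta equals: P( gamma^up < Theta ) = 1 - [ exp( - theta*c/s_x ) * sum_{n=0}^{m_x-1} ( (theta/s_x)^n / n! ) * sum_{i1=0}^{n} sum_{i2=0}^{n-i1} C(n,i1)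 * C(n-i1,i2) * c^{n-i1-i2} * ( Gamma(m_y+i1) / (Gamma(m_y) * s_y^{m_y}) ) * ( theta/s_x + 1/s_y )^{-(m_y+i1)} * ( Gamma(m_z+i2) / (Gamma(m_z) * s_z^{m_z}) ) * ( theta/s_x + 1/s_z )^{-(m_z+i2)} ] * [ exp( - theta/s_w ) * sum_{k=0}^{m_w-1} ( (theta/s_w)^k / k! ) * sum_{k1=0}^{k} C(k,k1) * ( Gamma(m_z+k1) / (Gamma(m_z) * s_z^{m_z}) ) * ( theta/s_w + 1/s_z )^{-(m_z+k1)} ], where C denotes binomial coefficients and Gamma is the Gamma function. -/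
open MeasureTheory ProbabilityTheory Real Finset

section SinrAuxSec
open Set Filter Topology
open scoped ENNReal NNReal

namespace SinrAux



/-- survival function of Gamma with integer shape. -/
noncomputable def Sv (m : ℕ) (r t : ℝ) : ℝ :=
  Real.exp (-(r * t)) * ∑ n ∈ Finset.range m, (r * t) ^ n / (Nat.factorial n : ℝ)

lemma Sv_nonneg (m : ℕ) {r t : ℝ} (hr : 0 ≤ r) (ht : 0 ≤ t) : 0 ≤ Sv m r t := by
  unfold Sv
  have : 0 ≤ ∑ n ∈ Finset.range m, (r * t) ^ n / (Nat.factorial n : ℝ) :=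
    Finset.sum_nonneg fun n _ => by positivity
  positivity

lemma hasDerivAt_Sv (k : ℕ) (r t : ℝ) :
    HasDerivAt (Sv (k + 1) r)
      (-(r ^ (k + 1) * t ^ k * Real.exp (-(r * t)) / (Nat.factorial k : ℝ))) t := by
  induction k with
  | zero =>
    have h : HasDerivAt (fun t : ℝ => Real.exp (-(r * t))) (-r * Real.exp (-(r * t))) t := by
      simpa [mul_comm] using (((hasDerivAt_id t).const_mul r).neg).exp
    have : Sv 1 r = fun t : ℝ => Real.exp (-(r * t)) := by
      funext t; simp [Sv]
    rw [this]
    simpa using h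
  | succ k ih =>
    have hs : Sv (k + 2) r = fun t : ℝ =>
        Sv (k + 1) r t + Real.exp (-(r * t)) * ((r * t) ^ (k + 1) / (Nat.factorial (k + 1) : ℝ)) := by
      funext t; simp [Sv, Finset.sum_range_succ, mul_add]
    rw [hs]
    have hexp : HasDerivAt (fun t : ℝ => Real.exp (-(r * t))) (-r * Real.exp (-(r * t))) t := by
      simpa [mul_comm] using (((hasDerivAt_id t).const_mul r).neg).exp
    have hpow : HasDerivAt (fun t : ℝ => (r * t) ^ (k + 1) / (Nat.factorial (k + 1) : ℝ))
        ((k + 1 : ℕ) * (r * t) ^ k * r / (Nat.factorial (k + 1) : ℝ)) t := by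
      have h1 : HasDerivAt (fun t : ℝ => (r * t)) r t := by
        simpa [mul_comm] using (hasDerivAt_id t).const_mul r
      exact ((h1.pow (k + 1)).div_const _).congr_deriv (by push_cast; ring_nf)
    have := ih.add (hexp.mul hpow)
    refine this.congr_deriv ?_
    have hfac : ((Nat.factorial (k + 1) : ℝ)) = (k + 1 : ℝ) * (Nat.factorial k : ℝ) := by
      rw [Nat.factorial_succ]; push_cast; ring
    have hk : (Nat.factorial k : ℝ) ≠ 0 := Nat.cast_ne_zero.mpr (Nat.factorial_ne_zero k)
    have hk1 : (Nat.factorial (k+1) : ℝ) ≠ 0 := Nat.cast_ne_zero.mpr (Nat.factorial_ne_zero _)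
    simp only [hfac]; field_simp
    push_cast; ring

lemma tendsto_Sv (m : ℕ) {r : ℝ} (hr : 0 < r) : Tendsto (Sv m r) atTop (𝓝 0) := by
  have h : Sv m r = fun t => ∑ n ∈ Finset.range m,
      ((r * t) ^ n * Real.exp (-(r * t)) / (Nat.factorial n : ℝ)) := by
    funext t; rw [Sv, Finset.mul_sum]; congr 1; funext n; ring
  rw [h]
  have : Tendsto (fun t : ℝ => r * t) atTop atTop :=
    Tendsto.const_mul_atTop hr tendsto_id
  have hzero : (0 : ℝ) = ∑ n ∈ Finset.range m, (0 : ℝ) := by simp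
  rw [hzero]
  refine tendsto_finset_sum _ fun n _ => ?_
  have hbase := (tendsto_pow_mul_exp_neg_atTop_nhds_zero n).comp this
  simpa [Function.comp] using hbase.div_const (Nat.factorial n : ℝ)




lemma gammaMeasure_Ici (k : ℕ) {r : ℝ} (hr : 0 < r) {t : ℝ} (ht : 0 ≤ t) :
    gammaMeasure (k + 1 : ℕ) r (Ici t) = ENNReal.ofReal (Sv (k + 1) r t) := by
  have hderiv : ∀ x ∈ Ici t, HasDerivAt (fun u => -(Sv (k+1) r u))
      (r ^ (k + 1) * x ^ k * Real.exp (-(r * x)) / (Nat.factorial k : ℝ)) x := by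
    intro x _
    exact (hasDerivAt_Sv k r x).neg.congr_deriv (by ring)
  have hpos : ∀ x ∈ Ioi t, 0 ≤ r ^ (k + 1) * x ^ k * Real.exp (-(r * x)) / (Nat.factorial k : ℝ) := by
    intro x hx
    have hx0 : (0:ℝ) ≤ x := le_trans ht (le_of_lt hx)
    positivity
  have htend : Tendsto (fun u => -(Sv (k+1) r u)) atTop (𝓝 0) := by
    simpa using (tendsto_Sv (k+1) hr).neg
  have hint : IntegrableOn (fun x => r ^ (k + 1) * x ^ k * Real.exp (-(r * x)) / (Nat.factorial k : ℝ)) (Ioi t) :=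
    integrableOn_Ioi_deriv_of_nonneg' hderiv hpos htend
  have hval : ∫ x in Ioi t, r ^ (k + 1) * x ^ k * Real.exp (-(r * x)) / (Nat.factorial k : ℝ)
      = Sv (k + 1) r t := by
    rw [integral_Ioi_of_hasDerivAt_of_nonneg' hderiv hpos htend]
    simp
  -- gammaMeasure as lintegral
  rw [gammaMeasure, withDensity_apply _ measurableSet_Ici]
  have hIio : (volume.restrict (Ici t)) = volume.restrict (Ioi t) := by
    rw [Measure.restrict_congr_set Ioi_ae_eq_Ici.symm]
  rw [hIio]
  have hcongr : ∀ x ∈ Ioi t, gammaPDF (k + 1 : ℕ) r x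
      = ENNReal.ofReal (r ^ (k + 1) * x ^ k * Real.exp (-(r * x)) / (Nat.factorial k : ℝ)) := by
    intro x hx
    have hx0 : 0 < x := lt_of_le_of_lt ht hx
    rw [gammaPDF_of_nonneg hx0.le]
    congr 1
    rw [show ((k + 1 : ℕ) : ℝ) = (k : ℝ) + 1 by push_cast; ring, Real.Gamma_nat_eq_factorial]
    have h1 : (k : ℝ) + 1 - 1 = (k : ℝ) := by ring
    rw [h1]
    rw [show x ^ (k : ℝ) = x ^ (k : ℕ) from Real.rpow_natCast x k]
    rw [show r ^ ((k : ℝ) + 1) = r ^ ((k+1 : ℕ) : ℕ) from by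
      rw [← Real.rpow_natCast r (k+1)]; push_cast; ring_nf]
    ring
  rw [setLIntegral_congr_fun measurableSet_Ioi hcongr]
  rw [← ofReal_integral_eq_lintegral_ofReal hint
    ((ae_restrict_iff' measurableSet_Ioi).mpr (ae_of_all _ hpos))]
  rw [hval]



lemma integral_pow_mul_exp (p : ℕ) {b : ℝ} (hb : 0 < b) :
    ∫ x in Ioi (0:ℝ), x ^ p * Real.exp (-(b * x)) = Real.Gamma (p + 1) / b ^ (p + 1 : ℕ) := by
  have h := integral_rpow_mul_exp_neg_mul_Ioi (a := (p:ℝ) + 1) (r := b) (by positivity) hb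
  have hcongr : ∀ x ∈ Ioi (0:ℝ), x ^ ((p:ℝ) + 1 - 1) * Real.exp (-(b * x))
      = x ^ p * Real.exp (-(b * x)) := by
    intro x hx
    rw [show (p:ℝ) + 1 - 1 = (p:ℝ) by ring, Real.rpow_natCast]
  rw [setIntegral_congr_fun measurableSet_Ioi hcongr] at h
  rw [h, div_eq_mul_inv, mul_comm]
  congr 1
  rw [one_mul, show ((p:ℝ) + 1) = ((p + 1 : ℕ) : ℝ) by push_cast; ring, Real.rpow_natCast,
    inv_pow]

lemma integrableOn_pow_mul_exp (p : ℕ) {b : ℝ} (hb : 0 < b) :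
    IntegrableOn (fun x => x ^ p * Real.exp (-(b * x))) (Ioi (0:ℝ)) := by
  have h := integrableOn_rpow_mul_exp_neg_mul_rpow (p := 1) (s := (p:ℝ)) (b := b)
    (neg_one_lt_zero.trans_le (Nat.cast_nonneg p)) one_pos hb
  apply h.congr_fun ?_ measurableSet_Ioi
  intro x hx
  simp only [Real.rpow_one, Real.rpow_natCast, neg_mul]

/-- tilted moment of the Gamma distribution. -/
lemma gamma_moment (k i : ℕ) {r b : ℝ} (hr : 0 < r) (hb : 0 ≤ b) :
    ∫⁻ x, ENNReal.ofReal (x ^ i * Real.exp (-(b * x))) ∂(gammaMeasure (k + 1 : ℕ) r)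
      = ENNReal.ofReal (Real.Gamma (((k+1 : ℕ) : ℝ) + i) / (Real.Gamma ((k+1 : ℕ)) ) * r ^ (k+1)
          * ((b + r) ^ (k + 1 + i : ℕ))⁻¹) := by
  have hmeas : Measurable fun x : ℝ => ENNReal.ofReal (x ^ i * Real.exp (-(b * x))) := by
    apply Measurable.ennreal_ofReal
    exact (measurable_id.pow_const i).mul ((measurable_id.const_mul b).neg.exp)
  have hd : Measurable (gammaPDF ((k + 1 : ℕ) : ℝ) r) := (measurable_gammaPDFReal _ _).ennreal_ofReal
  rw [gammaMeasure, lintegral_withDensity_eq_lintegral_mul _ hd hmeas]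
  set g : ℝ → ℝ≥0∞ := fun x => (gammaPDF ((k + 1 : ℕ) : ℝ) r * fun x => ENNReal.ofReal (x ^ i * Real.exp (-(b * x)))) x with hg
  have hsplit : ∫⁻ x, g x = (∫⁻ x in Iio 0, g x) + ∫⁻ x in Ici 0, g x := by
    rw [← lintegral_add_compl g measurableSet_Ici, compl_Ici, add_comm]
  have hleft : ∫⁻ x in Iio (0:ℝ), g x = 0 := by
    rw [setLIntegral_congr_fun (g := fun _ => 0) measurableSet_Iio
      (fun x (hx : x < 0) => by
        simp [hg, gammaPDF_of_neg hx]), lintegral_zero]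
  have hIoi : ∫⁻ x in Ici (0:ℝ), g x = ∫⁻ x in Ioi (0:ℝ), g x := by
    rw [Measure.restrict_congr_set Ioi_ae_eq_Ici.symm]
  have hbr : 0 < b + r := by linarith
  have hfun : ∀ x ∈ Ioi (0:ℝ), g x
      = ENNReal.ofReal (r ^ (k+1) / (Nat.factorial k : ℝ) * (x ^ (k + i) * Real.exp (-((b + r) * x)))) := by
    intro x hx
    have hx0 : (0:ℝ) < x := hx
    have hpdf : (0:ℝ) ≤ gammaPDFReal ((k + 1 : ℕ) : ℝ) r x :=
      gammaPDFReal_nonneg (by positivity) hr x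
    simp only [hg, Pi.mul_apply, gammaPDF, ← ENNReal.ofReal_mul hpdf]
    congr 1
    rw [gammaPDFReal, if_pos hx0.le]
    rw [show ((k + 1 : ℕ) : ℝ) = (k : ℝ) + 1 by push_cast; ring, Real.Gamma_nat_eq_factorial]
    rw [show (k : ℝ) + 1 - 1 = ((k : ℕ) : ℝ) by ring, Real.rpow_natCast]
    rw [show r ^ ((k:ℝ) + 1) = r ^ (k + 1 : ℕ) from by
      rw [← Real.rpow_natCast r (k+1)]; push_cast; ring_nf]
    rw [pow_add x k i]
    rw [show Real.exp (-((b + r) * x)) = Real.exp (-(r * x)) * Real.exp (-(b * x)) from by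
      rw [← Real.exp_add]; ring_nf]
    ring
  rw [hsplit, hleft, zero_add, hIoi, setLIntegral_congr_fun measurableSet_Ioi hfun]
  have hint : IntegrableOn (fun x => r ^ (k+1) / (Nat.factorial k : ℝ) * (x ^ (k + i) * Real.exp (-((b + r) * x)))) (Ioi (0:ℝ)) :=
    (integrableOn_pow_mul_exp (k + i) hbr).const_mul _
  rw [← ofReal_integral_eq_lintegral_ofReal hint
    ((ae_restrict_iff' measurableSet_Ioi).mpr (ae_of_all _ fun x (hx : (0:ℝ) < x) => by positivity))]
  rw [MeasureTheory.integral_const_mul, integral_pow_mul_exp (k + i) hbr]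
  congr 1
  have h1 : Real.Gamma (((k+1 : ℕ) : ℝ) + i) = Real.Gamma (((k + i : ℕ) : ℝ) + 1) := by
    congr 1; push_cast; ring
  have h2 : Real.Gamma (((k+1 : ℕ)) : ℝ) = (Nat.factorial k : ℝ) := by
    rw [show ((k + 1 : ℕ) : ℝ) = (k : ℝ) + 1 by push_cast; ring, Real.Gamma_nat_eq_factorial]
  rw [h1, h2, show k + 1 + i = k + i + 1 by ring]
  have hk : (Nat.factorial k : ℝ) ≠ 0 := Nat.cast_ne_zero.mpr (Nat.factorial_ne_zero k)
  have hbrpow : ((b + r) ^ (k + i + 1) : ℝ) ≠ 0 := by positivity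
  field_simp




/-- normalized tilted moment, as a real constant -/
noncomputable def Mom (k i : ℕ) (r b : ℝ) : ℝ :=
  Real.Gamma (((k+1 : ℕ) : ℝ) + i) / (Real.Gamma ((k+1 : ℕ))) * r ^ (k+1)
    * ((b + r) ^ (k + 1 + i : ℕ))⁻¹

lemma Mom_nonneg (k i : ℕ) {r b : ℝ} (hr : 0 < r) (hb : 0 ≤ b) : 0 ≤ Mom k i r b := by
  unfold Mom
  have h1 : 0 < Real.Gamma (((k+1 : ℕ) : ℝ) + i) := Real.Gamma_pos_of_pos (by positivity)
  have h2 : 0 < Real.Gamma (((k+1 : ℕ) : ℝ)) := Real.Gamma_pos_of_pos (by positivity)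
  have h3 : 0 ≤ b + r := by linarith
  positivity

lemma gamma_ae_nonneg (k : ℕ) (r : ℝ) :
    ∀ᵐ x ∂(gammaMeasure (k + 1 : ℕ) r), 0 ≤ x := by
  rw [ae_iff]
  have h : {x : ℝ | ¬ 0 ≤ x} = Set.Iio 0 := by ext x; simp
  rw [h, gammaMeasure, withDensity_apply _ measurableSet_Iio]
  exact lintegral_gammaPDF_of_nonpos le_rfl

lemma lintegral_ofReal_sum {ι : Type*} (s : Finset ι) (g : ι → ℝ → ℝ) (ν : Measure ℝ)
    (hmeas : ∀ j ∈ s, Measurable (g j)) (h0 : ∀ᵐ v ∂ν, ∀ j ∈ s, 0 ≤ g j v) :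
    ∫⁻ v, ENNReal.ofReal (∑ j ∈ s, g j v) ∂ν = ∑ j ∈ s, ∫⁻ v, ENNReal.ofReal (g j v) ∂ν := by
  rw [← lintegral_finset_sum s (fun j hj => (hmeas j hj).ennreal_ofReal)]
  apply lintegral_congr_ae
  filter_upwards [h0] with v hv
  exact ENNReal.ofReal_sum_of_nonneg hv

lemma Sv_expand (m : ℕ) (r θ c0 v : ℝ) :
    Sv m r (θ * (v + c0)) = ∑ n ∈ Finset.range m, ∑ j ∈ Finset.range (n+1),
      (Real.exp (-(r * θ * c0)) * (r * θ) ^ n / (Nat.factorial n : ℝ) * (n.choose j : ℝ)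
        * c0 ^ (n - j)) * (v ^ j * Real.exp (-(r * θ * v))) := by
  unfold Sv
  rw [Finset.mul_sum]
  refine Finset.sum_congr rfl fun n _ => ?_
  have h1 : r * (θ * (v + c0)) = (r * θ) * (v + c0) := by ring
  rw [h1, mul_pow, add_pow]
  have h2 : Real.exp (-(r * θ * (v + c0))) = Real.exp (-(r * θ * v)) * Real.exp (-(r * θ * c0)) := by
    rw [← Real.exp_add]; ring_nf
  rw [show -((r*θ) * (v + c0)) = -(r * θ * (v + c0)) by ring, h2]
  rw [Finset.mul_sum, Finset.sum_div, Finset.mul_sum]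
  refine Finset.sum_congr rfl fun j _ => ?_
  ring

/-- step 1: integrating a gamma survival of an affine argument against another gamma. -/
lemma step1 (kx kv : ℕ) {rx rv θ c0 : ℝ} (hrx : 0 < rx) (hrv : 0 < rv)
    (hθ : 0 < θ) (hc0 : 0 ≤ c0) :
    ∫⁻ v, gammaMeasure (kx + 1 : ℕ) rx (Ici (θ * (v + c0))) ∂(gammaMeasure (kv + 1 : ℕ) rv)
      = ENNReal.ofReal (∑ n ∈ Finset.range (kx+1), ∑ j ∈ Finset.range (n+1),
          (Real.exp (-(rx * θ * c0)) * (rx * θ) ^ n / (Nat.factorial n : ℝ) * (n.choose j : ℝ)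
            * c0 ^ (n - j)) * Mom kv j rv (rx * θ)) := by
  have hb : 0 ≤ rx * θ := by positivity
  have hmeas1 : ∀ (j : ℕ) (a b : ℝ), Measurable fun v : ℝ => a * (v ^ j * Real.exp (-(b * v))) := by
    intro j a b; fun_prop
  have hmeas2 : ∀ (j : ℕ) (b : ℝ), Measurable fun v : ℝ => v ^ j * Real.exp (-(b * v)) := by
    intro j b; fun_prop
  have hcoef : ∀ n j : ℕ, 0 ≤ Real.exp (-(rx * θ * c0)) * (rx * θ) ^ n / (Nat.factorial n : ℝ)
      * (n.choose j : ℝ) * c0 ^ (n - j) := fun n j => by positivity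
  calc ∫⁻ v, gammaMeasure (kx + 1 : ℕ) rx (Ici (θ * (v + c0))) ∂(gammaMeasure (kv + 1 : ℕ) rv)
      = ∫⁻ v, ENNReal.ofReal (∑ n ∈ Finset.range (kx+1), ∑ j ∈ Finset.range (n+1),
          (Real.exp (-(rx * θ * c0)) * (rx * θ) ^ n / (Nat.factorial n : ℝ) * (n.choose j : ℝ)
            * c0 ^ (n - j)) * (v ^ j * Real.exp (-(rx * θ * v)))) ∂(gammaMeasure (kv + 1 : ℕ) rv) := by
        apply lintegral_congr_ae
        filter_upwards [gamma_ae_nonneg kv rv] with v hv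
        rw [gammaMeasure_Ici kx hrx (by positivity), Sv_expand]
    _ = ∑ n ∈ Finset.range (kx+1), ∑ j ∈ Finset.range (n+1),
          ENNReal.ofReal ((Real.exp (-(rx * θ * c0)) * (rx * θ) ^ n / (Nat.factorial n : ℝ)
            * (n.choose j : ℝ) * c0 ^ (n - j)))
          * ∫⁻ v, ENNReal.ofReal (v ^ j * Real.exp (-(rx * θ * v))) ∂(gammaMeasure (kv + 1 : ℕ) rv) := by
        rw [lintegral_ofReal_sum _ _ _
          (fun n _ => Finset.measurable_sum _ fun j _ => hmeas1 j _ _)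
          (by
            filter_upwards [gamma_ae_nonneg kv rv] with v hv n _
            exact Finset.sum_nonneg fun j _ => mul_nonneg (hcoef n j) (by positivity))]
        refine Finset.sum_congr rfl fun n _ => ?_
        rw [lintegral_ofReal_sum _ _ _
          (fun j _ => hmeas1 j _ _)
          (by
            filter_upwards [gamma_ae_nonneg kv rv] with v hv j _
            exact mul_nonneg (hcoef n j) (by positivity))]
        refine Finset.sum_congr rfl fun j _ => ?_
        rw [← lintegral_const_mul _ ((hmeas2 j _).ennreal_ofReal)]
        apply lintegral_congr_ae
        filter_upwards [gamma_ae_nonneg kv rv] with v hv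
        rw [← ENNReal.ofReal_mul (hcoef n j)]
    _ = ∑ n ∈ Finset.range (kx+1), ∑ j ∈ Finset.range (n+1),
          ENNReal.ofReal ((Real.exp (-(rx * θ * c0)) * (rx * θ) ^ n / (Nat.factorial n : ℝ)
            * (n.choose j : ℝ) * c0 ^ (n - j)) * Mom kv j rv (rx * θ)) := by
        refine Finset.sum_congr rfl fun n _ => Finset.sum_congr rfl fun j _ => ?_
        rw [gamma_moment kv j hrv hb, ← ENNReal.ofReal_mul (hcoef n j)]
        rfl
    _ = ENNReal.ofReal (∑ n ∈ Finset.range (kx+1), ∑ j ∈ Finset.range (n+1),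
          (Real.exp (-(rx * θ * c0)) * (rx * θ) ^ n / (Nat.factorial n : ℝ) * (n.choose j : ℝ)
            * c0 ^ (n - j)) * Mom kv j rv (rx * θ)) := by
        rw [ENNReal.ofReal_sum_of_nonneg fun n _ => Finset.sum_nonneg fun j _ =>
          mul_nonneg (hcoef n j) (Mom_nonneg kv j hrv hb)]
        refine Finset.sum_congr rfl fun n _ => ?_
        rw [ENNReal.ofReal_sum_of_nonneg fun j _ => mul_nonneg (hcoef n j) (Mom_nonneg kv j hrv hb)]





lemma E1_expand (m ky : ℕ) (b c ry z : ℝ) :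
    ∑ n ∈ Finset.range m, ∑ i1 ∈ Finset.range (n+1),
      (Real.exp (-(b * (z + c))) * b ^ n / (Nat.factorial n : ℝ) * (n.choose i1 : ℝ)
        * (z + c) ^ (n - i1)) * Mom ky i1 ry b
    = ∑ n ∈ Finset.range m, ∑ i1 ∈ Finset.range (n+1), ∑ i2 ∈ Finset.range (n - i1 + 1),
      (Real.exp (-(b * c)) * b ^ n / (Nat.factorial n : ℝ) * (n.choose i1 : ℝ)
        * ((n - i1).choose i2 : ℝ) * c ^ (n - i1 - i2) * Mom ky i1 ry b)
      * (z ^ i2 * Real.exp (-(b * z))) := by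
  refine Finset.sum_congr rfl fun n _ => Finset.sum_congr rfl fun i1 _ => ?_
  have h2 : Real.exp (-(b * (z + c))) = Real.exp (-(b * z)) * Real.exp (-(b * c)) := by
    rw [← Real.exp_add]; ring_nf
  rw [h2, add_pow]
  rw [Finset.mul_sum, Finset.sum_mul]
  refine Finset.sum_congr rfl fun i2 _ => ?_
  ring

/-- step 2: the double integral for χ₁. -/
lemma step2 (kx ky kz : ℕ) {rx ry rz θ c : ℝ} (hrx : 0 < rx) (hry : 0 < ry) (hrz : 0 < rz)
    (hθ : 0 < θ) (hc : 0 < c) :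
    ∫⁻ z, (∫⁻ y, gammaMeasure (kx + 1 : ℕ) rx (Ici (θ * (z + y + c)))
        ∂(gammaMeasure (ky + 1 : ℕ) ry)) ∂(gammaMeasure (kz + 1 : ℕ) rz)
      = ENNReal.ofReal (∑ n ∈ Finset.range (kx+1), ∑ i1 ∈ Finset.range (n+1),
          ∑ i2 ∈ Finset.range (n - i1 + 1),
          (Real.exp (-(rx * θ * c)) * (rx * θ) ^ n / (Nat.factorial n : ℝ) * (n.choose i1 : ℝ)
            * ((n - i1).choose i2 : ℝ) * c ^ (n - i1 - i2) * Mom ky i1 ry (rx * θ))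
          * Mom kz i2 rz (rx * θ)) := by
  set b := rx * θ with hbdef
  have hb : 0 ≤ b := by positivity
  have hmeas1 : ∀ (j : ℕ) (a b : ℝ), Measurable fun v : ℝ => a * (v ^ j * Real.exp (-(b * v))) := by
    intro j a b; fun_prop
  have hmeas2 : ∀ (j : ℕ) (b : ℝ), Measurable fun v : ℝ => v ^ j * Real.exp (-(b * v)) := by
    intro j b; fun_prop
  have hcoef : ∀ (n i1 i2 : ℕ), 0 ≤ Real.exp (-(b * c)) * b ^ n / (Nat.factorial n : ℝ)
      * (n.choose i1 : ℝ) * ((n - i1).choose i2 : ℝ) * c ^ (n - i1 - i2) * Mom ky i1 ry b :=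
    fun n i1 i2 => mul_nonneg (by positivity) (Mom_nonneg ky i1 hry hb)
  calc ∫⁻ z, (∫⁻ y, gammaMeasure (kx + 1 : ℕ) rx (Ici (θ * (z + y + c)))
        ∂(gammaMeasure (ky + 1 : ℕ) ry)) ∂(gammaMeasure (kz + 1 : ℕ) rz)
      = ∫⁻ z, ENNReal.ofReal (∑ n ∈ Finset.range (kx+1), ∑ i1 ∈ Finset.range (n+1),
          ∑ i2 ∈ Finset.range (n - i1 + 1),
          (Real.exp (-(b * c)) * b ^ n / (Nat.factorial n : ℝ) * (n.choose i1 : ℝ)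
            * ((n - i1).choose i2 : ℝ) * c ^ (n - i1 - i2) * Mom ky i1 ry b)
          * (z ^ i2 * Real.exp (-(b * z)))) ∂(gammaMeasure (kz + 1 : ℕ) rz) := by
        apply lintegral_congr_ae
        filter_upwards [gamma_ae_nonneg kz rz] with z hz
        have hinner : ∫⁻ y, gammaMeasure (kx + 1 : ℕ) rx (Ici (θ * (z + y + c)))
            ∂(gammaMeasure (ky + 1 : ℕ) ry)
            = ∫⁻ y, gammaMeasure (kx + 1 : ℕ) rx (Ici (θ * (y + (z + c))))
            ∂(gammaMeasure (ky + 1 : ℕ) ry) := by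
          apply lintegral_congr fun y => ?_
          rw [show θ * (z + y + c) = θ * (y + (z + c)) by ring]
        rw [hinner, step1 kx ky hrx hry hθ (by linarith), ← hbdef, E1_expand]
    _ = ∑ n ∈ Finset.range (kx+1), ∑ i1 ∈ Finset.range (n+1), ∑ i2 ∈ Finset.range (n - i1 + 1),
          ENNReal.ofReal ((Real.exp (-(b * c)) * b ^ n / (Nat.factorial n : ℝ) * (n.choose i1 : ℝ)
            * ((n - i1).choose i2 : ℝ) * c ^ (n - i1 - i2) * Mom ky i1 ry b))
          * ∫⁻ z, ENNReal.ofReal (z ^ i2 * Real.exp (-(b * z))) ∂(gammaMeasure (kz + 1 : ℕ) rz) := by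
        rw [lintegral_ofReal_sum _ _ _
          (fun n _ => Finset.measurable_sum _ fun i1 _ => Finset.measurable_sum _ fun i2 _ =>
            hmeas1 i2 _ _)
          (by
            filter_upwards [gamma_ae_nonneg kz rz] with z hz n _
            exact Finset.sum_nonneg fun i1 _ => Finset.sum_nonneg fun i2 _ =>
              mul_nonneg (hcoef n i1 i2) (by positivity))]
        refine Finset.sum_congr rfl fun n _ => ?_
        rw [lintegral_ofReal_sum _ _ _
          (fun i1 _ => Finset.measurable_sum _ fun i2 _ => hmeas1 i2 _ _)
          (by
            filter_upwards [gamma_ae_nonneg kz rz] with z hz i1 _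
            exact Finset.sum_nonneg fun i2 _ => mul_nonneg (hcoef n i1 i2) (by positivity))]
        refine Finset.sum_congr rfl fun i1 _ => ?_
        rw [lintegral_ofReal_sum _ _ _
          (fun i2 _ => hmeas1 i2 _ _)
          (by
            filter_upwards [gamma_ae_nonneg kz rz] with z hz i2 _
            exact mul_nonneg (hcoef n i1 i2) (by positivity))]
        refine Finset.sum_congr rfl fun i2 _ => ?_
        rw [← lintegral_const_mul _ ((hmeas2 i2 _).ennreal_ofReal)]
        apply lintegral_congr_ae
        filter_upwards [gamma_ae_nonneg kz rz] with z hz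
        rw [← ENNReal.ofReal_mul (hcoef n i1 i2)]
    _ = ∑ n ∈ Finset.range (kx+1), ∑ i1 ∈ Finset.range (n+1), ∑ i2 ∈ Finset.range (n - i1 + 1),
          ENNReal.ofReal ((Real.exp (-(b * c)) * b ^ n / (Nat.factorial n : ℝ) * (n.choose i1 : ℝ)
            * ((n - i1).choose i2 : ℝ) * c ^ (n - i1 - i2) * Mom ky i1 ry b) * Mom kz i2 rz b) := by
        refine Finset.sum_congr rfl fun n _ => Finset.sum_congr rfl fun i1 _ =>
          Finset.sum_congr rfl fun i2 _ => ?_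
        rw [gamma_moment kz i2 hrz hb, ← ENNReal.ofReal_mul (hcoef n i1 i2)]
        rfl
    _ = ENNReal.ofReal (∑ n ∈ Finset.range (kx+1), ∑ i1 ∈ Finset.range (n+1),
          ∑ i2 ∈ Finset.range (n - i1 + 1),
          (Real.exp (-(b * c)) * b ^ n / (Nat.factorial n : ℝ) * (n.choose i1 : ℝ)
            * ((n - i1).choose i2 : ℝ) * c ^ (n - i1 - i2) * Mom ky i1 ry b)
          * Mom kz i2 rz b) := by
        rw [ENNReal.ofReal_sum_of_nonneg fun n _ => Finset.sum_nonneg fun i1 _ =>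
          Finset.sum_nonneg fun i2 _ => mul_nonneg (hcoef n i1 i2) (Mom_nonneg kz i2 hrz hb)]
        refine Finset.sum_congr rfl fun n _ => ?_
        rw [ENNReal.ofReal_sum_of_nonneg fun i1 _ =>
          Finset.sum_nonneg fun i2 _ => mul_nonneg (hcoef n i1 i2) (Mom_nonneg kz i2 hrz hb)]
        refine Finset.sum_congr rfl fun i1 _ => ?_
        rw [ENNReal.ofReal_sum_of_nonneg fun i2 _ => mul_nonneg (hcoef n i1 i2)
          (Mom_nonneg kz i2 hrz hb)]


lemma ae_nonneg_of_map_gamma {Ω : Type*} [MeasurableSpace Ω] {μ : Measure Ω} {Y : Ω → ℝ}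
    (hY : Measurable Y) {a r : ℝ} (h : μ.map Y = gammaMeasure a r) : ∀ᵐ ω ∂μ, 0 ≤ Y ω := by
  rw [ae_iff]
  have hset : {ω | ¬ 0 ≤ Y ω} = Y ⁻¹' (Set.Iio 0) := by ext ω; simp
  rw [hset, ← Measure.map_apply hY measurableSet_Iio, h, gammaMeasure,
    withDensity_apply _ measurableSet_Iio]
  exact lintegral_gammaPDF_of_nonpos le_rfl




lemma zpow_help (a : ℝ) (k i : ℕ) :
    a ^ (-(((k+1:ℕ) : ℤ) + (i:ℕ))) = (a ^ (k+1+i : ℕ))⁻¹ := by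
  rw [show (-(((k+1:ℕ) : ℤ) + (i:ℕ))) = -((k+1+i : ℕ) : ℤ) by push_cast; ring,
    zpow_neg, zpow_natCast]

lemma chi2_eq (kw kz : ℕ) {s_w s_z θ : ℝ} (hsw : 0 < s_w) (hsz : 0 < s_z) (hθ : 0 < θ) :
    (∑ k ∈ Finset.range (kw+1), ∑ k1 ∈ Finset.range (k+1),
      Real.exp (-(1/s_w * θ * 1)) * (1/s_w * θ) ^ k / (Nat.factorial k : ℝ)
        * (k.choose k1 : ℝ) * (1:ℝ) ^ (k - k1) * Mom kz k1 (1/s_z) (1/s_w * θ))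
    = Real.exp (-(θ / s_w)) *
        ∑ k ∈ Finset.range (kw+1), ((θ / s_w) ^ k / (Nat.factorial k : ℝ)) *
          ∑ k1 ∈ Finset.range (k + 1),
            (k.choose k1 : ℝ) *
            (Real.Gamma (((kz+1:ℕ) : ℝ) + k1) / (Real.Gamma ((kz+1:ℕ)) * s_z ^ (kz+1))) *
            (θ / s_w + 1 / s_z) ^ (-(((kz+1:ℕ) : ℤ) + (k1:ℕ))) := by
  have hG : (0:ℝ) < Real.Gamma (((kz+1:ℕ) : ℝ)) := Real.Gamma_pos_of_pos (by positivity)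
  have hbase : (0:ℝ) < θ / s_w + 1 / s_z := by positivity
  simp only [Finset.mul_sum]
  refine Finset.sum_congr rfl fun k _ => Finset.sum_congr rfl fun k1 _ => ?_
  rw [Mom, zpow_help]
  rw [show 1/s_w * θ = θ/s_w from by ring]
  have hfac : ((Nat.factorial k : ℝ)) ≠ 0 := Nat.cast_ne_zero.mpr (Nat.factorial_ne_zero k)
  have hb1 : ((θ / s_w + 1 / s_z) ^ (kz + 1 + k1 : ℕ)) ≠ 0 := by positivity
  have hsz' : s_z ^ (kz+1) ≠ 0 := by positivity
  rw [mul_one, one_pow]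
  have hsz0 : s_z ≠ 0 := hsz.ne'
  field_simp
  simp only [one_div, inv_pow]; field_simp


lemma chi1_eq (kx ky kz : ℕ) {s_x s_y s_z θ c : ℝ} (hsx : 0 < s_x) (hsy : 0 < s_y)
    (hsz : 0 < s_z) (hθ : 0 < θ) (hc : 0 < c) :
    (∑ n ∈ Finset.range (kx+1), ∑ i1 ∈ Finset.range (n+1), ∑ i2 ∈ Finset.range (n - i1 + 1),
      Real.exp (-(1/s_x * θ * c)) * (1/s_x * θ) ^ n / (Nat.factorial n : ℝ)
        * (n.choose i1 : ℝ) * ((n - i1).choose i2 : ℝ) * c ^ (n - i1 - i2)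
        * Mom ky i1 (1/s_y) (1/s_x * θ) * Mom kz i2 (1/s_z) (1/s_x * θ))
    = Real.exp (-(θ * c / s_x)) *
        ∑ n ∈ Finset.range (kx+1), ((θ / s_x) ^ n / (Nat.factorial n : ℝ)) *
          ∑ i1 ∈ Finset.range (n + 1), ∑ i2 ∈ Finset.range (n - i1 + 1),
            (n.choose i1 : ℝ) * ((n - i1).choose i2 : ℝ) * c ^ (n - i1 - i2) *
            (Real.Gamma (((ky+1:ℕ) : ℝ) + i1) / (Real.Gamma ((ky+1:ℕ)) * s_y ^ (ky+1))) *
            (θ / s_x + 1 / s_y) ^ (-(((ky+1:ℕ) : ℤ) + (i1:ℕ))) *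
            (Real.Gamma (((kz+1:ℕ) : ℝ) + i2) / (Real.Gamma ((kz+1:ℕ)) * s_z ^ (kz+1))) *
            (θ / s_x + 1 / s_z) ^ (-(((kz+1:ℕ) : ℤ) + (i2:ℕ))) := by
  have hGy : (0:ℝ) < Real.Gamma (((ky+1:ℕ) : ℝ)) := Real.Gamma_pos_of_pos (by positivity)
  have hGz : (0:ℝ) < Real.Gamma (((kz+1:ℕ) : ℝ)) := Real.Gamma_pos_of_pos (by positivity)
  have hby : (0:ℝ) < θ / s_x + 1 / s_y := by positivity
  have hbz : (0:ℝ) < θ / s_x + 1 / s_z := by positivity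
  simp only [Finset.mul_sum]
  refine Finset.sum_congr rfl fun n _ => Finset.sum_congr rfl fun i1 _ =>
    Finset.sum_congr rfl fun i2 _ => ?_
  rw [Mom, Mom, zpow_help, zpow_help]
  rw [show 1/s_x * θ = θ/s_x from by ring, show θ/s_x * c = θ * c / s_x from by ring]
  have hfac : ((Nat.factorial n : ℝ)) ≠ 0 := Nat.cast_ne_zero.mpr (Nat.factorial_ne_zero n)
  have hb1 : ((θ / s_x + 1 / s_y) ^ (ky + 1 + i1 : ℕ)) ≠ 0 := by positivity
  have hb2 : ((θ / s_x + 1 / s_z) ^ (kz + 1 + i2 : ℕ)) ≠ 0 := by positivity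
  have hsy' : s_y ^ (ky+1) ≠ 0 := by positivity
  have hsz' : s_z ^ (kz+1) ≠ 0 := by positivity
  have hsy0 : s_y ≠ 0 := hsy.ne'
  have hsz0 : s_z ≠ 0 := hsz.ne'
  field_simp
  simp only [one_div, inv_pow]; field_simp


end SinrAux
end SinrAuxSec

open SinrAux Set Filter Topology
open scoped ENNReal NNReal

/-- cdf of the upper-bounded secondary SINR of Scenario (a):
`P(γR · min(X/(Z+Y+c), W/(Z'+1)) < Θ) = 1 - χ₁ · χ₂` in closed form, with
`θ = Θ/γR`. -/
theorem secondary_sinr_cdf_scenario_a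
    {Ω : Type*} [MeasurableSpace Ω] (μ : Measure Ω) [IsProbabilityMeasure μ]
    (m_x m_y m_z m_w : ℕ) (hmx : 0 < m_x) (hmy : 0 < m_y) (hmz : 0 < m_z) (hmw : 0 < m_w)
    (s_x s_y s_z s_w : ℝ) (hsx : 0 < s_x) (hsy : 0 < s_y) (hsz : 0 < s_z) (hsw : 0 < s_w)
    (X Y Z Z' W : Ω → ℝ)
    (hX : Measurable X) (hY : Measurable Y) (hZ : Measurable Z)
    (hZ' : Measurable Z') (hW : Measurable W)
    (hXd : μ.map X = gammaMeasure m_x (1 / s_x))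
    (hYd : μ.map Y = gammaMeasure m_y (1 / s_y))
    (hZd : μ.map Z = gammaMeasure m_z (1 / s_z))
    (hZ'd : μ.map Z' = gammaMeasure m_z (1 / s_z))
    (hWd : μ.map W = gammaMeasure m_w (1 / s_w))
    (hindep : iIndepFun ![X, Y, Z, Z', W] μ)
    (Θ γR c : ℝ) (hΘ : 0 < Θ) (hγR : 0 < γR) (hc : 0 < c)
    (θ : ℝ) (hθdef : θ = Θ / γR) :
    (μ {ω | γR * min (X ω / (Z ω + Y ω + c)) (W ω / (Z' ω + 1)) < Θ}).toReal =
      1 -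
      (Real.exp (-(θ * c / s_x)) *
        ∑ n ∈ Finset.range m_x, ((θ / s_x) ^ n / (Nat.factorial n : ℝ)) *
          ∑ i1 ∈ Finset.range (n + 1), ∑ i2 ∈ Finset.range (n - i1 + 1),
            (n.choose i1 : ℝ) * ((n - i1).choose i2 : ℝ) * c ^ (n - i1 - i2) *
            (Real.Gamma ((m_y : ℝ) + i1) / (Real.Gamma m_y * s_y ^ m_y)) *
            (θ / s_x + 1 / s_y) ^ (-((m_y : ℤ) + i1)) *
            (Real.Gamma ((m_z : ℝ) + i2) / (Real.Gamma m_z * s_z ^ m_z)) *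
            (θ / s_x + 1 / s_z) ^ (-((m_z : ℤ) + i2))) *
      (Real.exp (-(θ / s_w)) *
        ∑ k ∈ Finset.range m_w, ((θ / s_w) ^ k / (Nat.factorial k : ℝ)) *
          ∑ k1 ∈ Finset.range (k + 1),
            (k.choose k1 : ℝ) *
            (Real.Gamma ((m_z : ℝ) + k1) / (Real.Gamma m_z * s_z ^ m_z)) *
            (θ / s_w + 1 / s_z) ^ (-((m_z : ℤ) + k1))) := by
  obtain ⟨kx, rfl⟩ := Nat.exists_eq_succ_of_ne_zero hmx.ne'
  obtain ⟨ky, rfl⟩ := Nat.exists_eq_succ_of_ne_zero hmy.ne'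
  obtain ⟨kz, rfl⟩ := Nat.exists_eq_succ_of_ne_zero hmz.ne'
  obtain ⟨kw, rfl⟩ := Nat.exists_eq_succ_of_ne_zero hmw.ne'
  have hθ : 0 < θ := hθdef ▸ div_pos hΘ hγR
  have hrx : (0:ℝ) < 1 / s_x := by positivity
  have hry : (0:ℝ) < 1 / s_y := by positivity
  have hrz : (0:ℝ) < 1 / s_z := by positivity
  have hrw : (0:ℝ) < 1 / s_w := by positivity
  set gx := gammaMeasure (kx + 1 : ℕ) (1 / s_x) with hgx
  set gy := gammaMeasure (ky + 1 : ℕ) (1 / s_y) with hgy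
  set gz := gammaMeasure (kz + 1 : ℕ) (1 / s_z) with hgz
  set gw := gammaMeasure (kw + 1 : ℕ) (1 / s_w) with hgw
  haveI : IsProbabilityMeasure gx := isProbabilityMeasure_gammaMeasure (by positivity) hrx
  haveI : IsProbabilityMeasure gy := isProbabilityMeasure_gammaMeasure (by positivity) hry
  haveI : IsProbabilityMeasure gz := isProbabilityMeasure_gammaMeasure (by positivity) hrz
  haveI : IsProbabilityMeasure gw := isProbabilityMeasure_gammaMeasure (by positivity) hrw
  -- the two target real quantities (as produced by step2/step1)
  set R1 : ℝ := ∑ n ∈ Finset.range (kx+1), ∑ i1 ∈ Finset.range (n+1),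
      ∑ i2 ∈ Finset.range (n - i1 + 1),
      (Real.exp (-((1/s_x) * θ * c)) * ((1/s_x) * θ) ^ n / (Nat.factorial n : ℝ)
        * (n.choose i1 : ℝ) * ((n - i1).choose i2 : ℝ) * c ^ (n - i1 - i2)
        * Mom ky i1 (1/s_y) ((1/s_x) * θ)) * Mom kz i2 (1/s_z) ((1/s_x) * θ) with hR1
  set R2 : ℝ := ∑ k ∈ Finset.range (kw+1), ∑ k1 ∈ Finset.range (k+1),
      (Real.exp (-((1/s_w) * θ * 1)) * ((1/s_w) * θ) ^ k / (Nat.factorial k : ℝ)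
        * (k.choose k1 : ℝ) * (1:ℝ) ^ (k - k1)) * Mom kz k1 (1/s_z) ((1/s_w) * θ) with hR2
  -- measurable pieces
  have hmeasAll : ∀ i, Measurable (![X, Y, Z, Z', W] i) := by
    intro i; fin_cases i <;> simpa
  -- the event T = complement
  set T : Set Ω := {ω | θ ≤ min (X ω / (Z ω + Y ω + c)) (W ω / (Z' ω + 1))} with hT
  have hTmeas : MeasurableSet T := by
    apply measurableSet_le measurable_const
    exact (hX.div ((hZ.add hY).add_const c)).min (hW.div (hZ'.add_const 1))
  have hcompl : {ω | γR * min (X ω / (Z ω + Y ω + c)) (W ω / (Z' ω + 1)) < Θ} = Tᶜ := by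
    ext ω
    simp only [hT, Set.mem_setOf_eq, Set.mem_compl_iff, not_le, hθdef]
    rw [mul_comm]
    exact (lt_div_iff₀ hγR).symm
  -- events with cleared denominators
  set A1 : Set Ω := {ω | θ * (Z ω + Y ω + c) ≤ X ω} with hA1
  set A2 : Set Ω := {ω | θ * (Z' ω + 1) ≤ W ω} with hA2
  have hTA : μ T = μ (A1 ∩ A2) := by
    apply measure_congr
    rw [Filter.eventuallyEq_set]
    filter_upwards [ae_nonneg_of_map_gamma hY hYd, ae_nonneg_of_map_gamma hZ hZd,
      ae_nonneg_of_map_gamma hZ' hZ'd] with ω h1 h2 h3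
    have hd1 : 0 < Z ω + Y ω + c := by linarith
    have hd2 : 0 < Z' ω + 1 := by linarith
    simp only [hT, hA1, hA2, Set.mem_setOf_eq, Set.mem_inter_iff, le_min_iff,
      le_div_iff₀ hd1, le_div_iff₀ hd2]
  -- independence: A1 ⊥ A2
  set F1 : Ω → (ℝ × ℝ) × ℝ := fun ω => ((Z ω, Y ω), X ω) with hF1
  set F2 : Ω → ℝ × ℝ := fun ω => (Z' ω, W ω) with hF2
  have hF1meas : Measurable F1 := ((hZ.prodMk hY).prodMk hX)
  have hF2meas : Measurable F2 := (hZ'.prodMk hW)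
  set s1 : Set ((ℝ × ℝ) × ℝ) := {p | θ * (p.1.1 + p.1.2 + c) ≤ p.2} with hs1
  set s2 : Set (ℝ × ℝ) := {p | θ * (p.1 + 1) ≤ p.2} with hs2
  have hs1meas : MeasurableSet s1 :=
    measurableSet_le (((measurable_fst.fst.add measurable_fst.snd).add_const c).const_mul θ)
      measurable_snd
  have hs2meas : MeasurableSet s2 :=
    measurableSet_le ((measurable_fst.add_const 1).const_mul θ) measurable_snd
  have hA1pre : A1 = F1 ⁻¹' s1 := rfl
  have hA2pre : A2 = F2 ⁻¹' s2 := rfl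
  have hindepF : IndepFun F1 F2 μ := by
    have h := hindep.indepFun_finset {2, 1, 0} {3, 4} (by decide) hmeasAll
    have hφ1 : Measurable (fun v : (({2, 1, 0} : Finset (Fin 5)) → ℝ) =>
        ((v ⟨2, by decide⟩, v ⟨1, by decide⟩), v ⟨0, by decide⟩)) := by fun_prop
    have hφ2 : Measurable (fun v : (({3, 4} : Finset (Fin 5)) → ℝ) =>
        (v ⟨3, by decide⟩, v ⟨4, by decide⟩)) := by fun_prop
    have := h.comp hφ1 hφ2
    exact this
  have hsplit : μ (A1 ∩ A2) = μ A1 * μ A2 := by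
    rw [hA1pre, hA2pre]
    exact hindepF.measure_inter_preimage_eq_mul _ _ hs1meas hs2meas
  -- law of F1
  have hmapZY : μ.map (fun ω => (Z ω, Y ω)) = gz.prod gy := by
    have hi : IndepFun Z Y μ := by
      have := hindep.indepFun (i := 2) (j := 1) (by decide)
      simpa using this
    rw [(indepFun_iff_map_prod_eq_prod_map_map hZ.aemeasurable hY.aemeasurable).mp hi,
      hZd, hYd]
  have hmapF1 : μ.map F1 = (gz.prod gy).prod gx := by
    have hi : IndepFun (fun ω => (Z ω, Y ω)) X μ := by
      have := hindep.indepFun_prodMk hmeasAll 2 1 0 (by decide) (by decide)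
      simpa using this
    rw [hF1]
    rw [(indepFun_iff_map_prod_eq_prod_map_map (hZ.prodMk hY).aemeasurable
      hX.aemeasurable).mp hi, hmapZY, hXd]
  have hmapF2 : μ.map F2 = gz.prod gw := by
    have hi : IndepFun Z' W μ := by
      have := hindep.indepFun (i := 3) (j := 4) (by decide)
      simpa using this
    rw [hF2, (indepFun_iff_map_prod_eq_prod_map_map hZ'.aemeasurable hW.aemeasurable).mp hi,
      hZ'd, hWd]
  -- compute μ A1
  have hmono : Measurable (fun t : ℝ => gx (Ici t)) := by
    apply Antitone.measurable
    intro a b hab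
    exact measure_mono (Ici_subset_Ici.mpr hab)
  have hA1val : μ A1 = ENNReal.ofReal R1 := by
    rw [hA1pre, ← Measure.map_apply hF1meas hs1meas, hmapF1, Measure.prod_apply hs1meas]
    have hfun : (fun q : ℝ × ℝ => gx (Prod.mk q ⁻¹' s1))
        = fun q : ℝ × ℝ => gx (Ici (θ * (q.1 + q.2 + c))) := rfl
    rw [hfun]
    have hmeasq : Measurable (fun q : ℝ × ℝ => gx (Set.Ici (θ * (q.1 + q.2 + c)))) :=
      hmono.comp (((measurable_fst.add measurable_snd).add_const c).const_mul θ)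
    rw [lintegral_prod _ hmeasq.aemeasurable]
    rw [hR1, hgx, hgy, hgz, step2 kx ky kz hrx hry hrz hθ hc]
  -- compute μ A2
  have hmonow : Measurable (fun t : ℝ => gw (Ici t)) := by
    apply Antitone.measurable
    intro a b hab
    exact measure_mono (Ici_subset_Ici.mpr hab)
  have hA2val : μ A2 = ENNReal.ofReal R2 := by
    rw [hA2pre, ← Measure.map_apply hF2meas hs2meas, hmapF2, Measure.prod_apply hs2meas]
    have hfun : (fun z' : ℝ => gw (Prod.mk z' ⁻¹' s2))
        = fun z' : ℝ => gw (Ici (θ * (z' + 1))) := rfl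
    rw [hfun, hR2, hgw, hgz]
    exact step1 kw kz hrw hrz hθ (by norm_num)
  -- nonnegativity of R1 R2
  have hbx : 0 ≤ (1/s_x) * θ := by positivity
  have hbw : 0 ≤ (1/s_w) * θ := by positivity
  have hR1nn : 0 ≤ R1 := by
    rw [hR1]
    refine Finset.sum_nonneg fun n _ => Finset.sum_nonneg fun i1 _ =>
      Finset.sum_nonneg fun i2 _ => mul_nonneg (mul_nonneg (by positivity)
        (Mom_nonneg ky i1 hry hbx)) (Mom_nonneg kz i2 hrz hbx)
  have hR2nn : 0 ≤ R2 := by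
    rw [hR2]
    refine Finset.sum_nonneg fun k _ => Finset.sum_nonneg fun k1 _ =>
      mul_nonneg (by positivity) (Mom_nonneg kz k1 hrz hbw)
  -- assemble
  rw [hcompl, measure_compl hTmeas (measure_ne_top μ T), measure_univ, hTA, hsplit,
    hA1val, hA2val]
  rw [ENNReal.toReal_sub_of_le (by
      rw [← hA1val, ← hA2val, ← hsplit, ← hTA]; exact prob_le_one) ENNReal.one_ne_top]
  rw [ENNReal.toReal_mul, ENNReal.toReal_ofReal hR1nn, ENNReal.toReal_ofReal hR2nn,
    ENNReal.toReal_one]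
  congr 1
  congr 1
  · exact chi1_eq kx ky kz hsx hsy hsz hθ hc
  · exact chi2_eq kw kz hsw hsz hθ
end
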